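/- arXiv:1810.11680 — 10 statements merged into one kernel-verified Lean document; each statement's English description precedes it below -/
import Mathlib

section
/- For every n ≥ 1 and every n×n complex matrix A, the numerical range W(A) is a convex subset of ℂ. -/
open Complex

local notation "⟪" x ", " y "⟫" => (inner ℂ x y : ℂ)

lemma key_lemma {E : Type*} [NormedAddCommGroup E] [InnerProductSpace ℂ E]
    [FiniteDimensional ℂ E] (B : E →ₗ[ℂ] E) (u v : E)
    (hu : ‖u‖ = 1) (hv : ‖v‖ = 1)
    (hgu : ⟪u, B u⟫ = 1) (hgv : ⟪v, B v⟫ = 0)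
    (t : ℝ) (ht : t ∈ Set.Icc (0:ℝ) 1) :
    ∃ x : E, ‖x‖ = 1 ∧ ⟪x, B x⟫ = (t : ℂ) := by
  classical
  set p : ℂ := ⟪u, B v⟫ with hp
  set q : ℂ := ⟪v, B u⟫ with hq
  set c : ℂ := p - (starRingEnd ℂ) q with hc
  set lam : ℂ := if c = 0 then 1 else (‖c‖ : ℂ)⁻¹ * c with hlam
  have hlamnorm : ‖lam‖ = 1 := by
    rw [hlam]; split_ifs with h
    · simp
    · rw [norm_mul, norm_inv, Complex.norm_real, Real.norm_eq_abs, _root_.abs_of_nonneg (norm_nonneg c)]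
      exact inv_mul_cancel₀ (norm_ne_zero_iff.mpr h)
  have hImc : ((starRingEnd ℂ) lam * c).im = 0 := by
    rw [hlam]; split_ifs with h
    · simp [h]
    · have h1 : (starRingEnd ℂ) ((‖c‖ : ℂ)⁻¹ * c) * c
          = (‖c‖ : ℂ)⁻¹ * ((starRingEnd ℂ) c * c) := by
        rw [map_mul, map_inv₀, Complex.conj_ofReal]; ring
      have h2 : (starRingEnd ℂ) c * c = ((Complex.normSq c : ℝ) : ℂ) := by
        rw [mul_comm, Complex.mul_conj]
      rw [h1, h2, ← Complex.ofReal_inv, ← Complex.ofReal_mul]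
      simp
  set u' : E := lam • u with hu'
  have hu'norm : ‖u'‖ = 1 := by rw [hu', norm_smul, hlamnorm, hu, mul_one]
  have hconjlam : (starRingEnd ℂ) lam * lam = 1 := by
    rw [mul_comm, Complex.mul_conj]
    have : Complex.normSq lam = 1 := by
      have := Complex.sq_norm lam
      rw [hlamnorm] at this
      simpa using this.symm
    rw [this]; simp
  have hgu' : ⟪u', B u'⟫ = 1 := by
    rw [hu', map_smul, inner_smul_left, inner_smul_right, hgu, mul_one, hconjlam]
  set r : ℂ := ⟪u', B v⟫ + ⟪v, B u'⟫ with hr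
  have hrval : r = (starRingEnd ℂ) lam * p + lam * q := by
    rw [hr, hu', map_smul, inner_smul_left, inner_smul_right, hp, hq]
  have hrim : r.im = 0 := by
    have h3 : r = (starRingEnd ℂ) lam * c + (lam * q + (starRingEnd ℂ) (lam * q)) := by
      rw [hrval, hc, map_mul]; ring
    rw [h3, Complex.add_im, hImc, Complex.add_conj]
    simp
  set w : ℝ → E := fun s => (s : ℂ) • u' + (1 - (s : ℂ)) • v with hw
  have hwval : ∀ s : ℝ, ⟪w s, B (w s)⟫
      = ((s : ℂ))^2 + (s : ℂ) * (1 - (s : ℂ)) * r := by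
    intro s
    rw [hw]
    simp only [map_add, map_smul, inner_add_left, inner_add_right, inner_smul_left,
      inner_smul_right, map_sub, map_one, Complex.conj_ofReal]
    rw [hgu', hgv]
    rw [hr]
    ring
  have hwim : ∀ s : ℝ, (⟪w s, B (w s)⟫).im = 0 := by
    intro s
    rw [hwval s]
    have h1 : (((s:ℂ))^2).im = 0 := by
      simp [pow_two, Complex.mul_im]
    have h2 : ((s : ℂ) * (1 - (s : ℂ)) * r).im = 0 := by
      have h4 : (s : ℂ) * (1 - (s : ℂ)) = ((s * (1 - s) : ℝ) : ℂ) := by push_cast; ring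
      rw [h4, Complex.im_ofReal_mul, hrim, mul_zero]
    rw [Complex.add_im, h1, h2, add_zero]
  have hwne : ∀ s : ℝ, w s ≠ 0 := by
    intro s h0
    by_cases hs0 : s = 0
    · rw [hw] at h0
      simp only [hs0, Complex.ofReal_zero, zero_smul, zero_add, sub_zero,
        Complex.ofReal_one, one_smul] at h0
      rw [h0] at hv; simp at hv
    · have hsne : (s : ℂ) ≠ 0 := by exact_mod_cast hs0
      have h1 : (s : ℂ) • u' = -((1 - (s : ℂ)) • v) := by
        rw [hw] at h0
        exact eq_neg_of_add_eq_zero_left h0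
      set mu : ℂ := -((s : ℂ)⁻¹ * (1 - (s : ℂ))) with hmu
      have h2 : u' = mu • v := by
        have h1' := congrArg (fun z : E => (s : ℂ)⁻¹ • z) h1
        simp only [smul_smul, smul_neg, ← neg_smul] at h1'
        rw [inv_mul_cancel₀ hsne, one_smul] at h1'
        rw [h1', hmu]
        congr 1
        ring
      have h3 : ⟪u', B u'⟫ = 0 := by
        rw [h2, map_smul, inner_smul_left, inner_smul_right, hgv]
        ring
      rw [hgu'] at h3
      exact one_ne_zero h3
  -- the real-valued function along the path
  set F : ℝ → ℝ := fun s => (⟪w s, B (w s)⟫).re / ‖w s‖ ^ 2 with hF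
  have hwcont : Continuous w := by
    rw [hw]; fun_prop
  have hinner_cont : Continuous fun s => ⟪w s, B (w s)⟫ := by
    have hBc : Continuous (B : E → E) := B.continuous_of_finiteDimensional
    exact continuous_inner.comp (hwcont.prodMk (hBc.comp hwcont))
  have hFcont : Continuous F := by
    rw [hF]
    apply Continuous.div
    · exact Complex.continuous_re.comp hinner_cont
    · exact (hwcont.norm.pow 2)
    · intro s
      exact pow_ne_zero 2 (norm_ne_zero_iff.mpr (hwne s))
  have hF0 : F 0 = 0 := by
    have hw0 : w 0 = v := by
      rw [hw]; simp
    rw [hF]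
    simp only [hw0, hgv, hv]
    simp
  have hF1 : F 1 = 1 := by
    have hw1 : w 1 = u' := by
      rw [hw]; simp
    rw [hF]
    simp only [hw1, hgu', hu'norm]
    simp
  have hsub : Set.Icc (F 0) (F 1) ⊆ F '' Set.Icc 0 1 :=
    intermediate_value_Icc zero_le_one hFcont.continuousOn
  have htmem : t ∈ Set.Icc (F 0) (F 1) := by rw [hF0, hF1]; exact ht
  obtain ⟨s₀, _, hFs₀⟩ := hsub htmem
  -- the witness
  set x : E := (‖w s₀‖ : ℂ)⁻¹ • w s₀ with hx
  have hwn : ‖w s₀‖ ≠ 0 := norm_ne_zero_iff.mpr (hwne s₀)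
  refine ⟨x, ?_, ?_⟩
  · rw [hx, norm_smul, norm_inv, Complex.norm_real, Real.norm_eq_abs,
      _root_.abs_of_nonneg (norm_nonneg _)]
    field_simp
  · rw [hx, map_smul, inner_smul_left, inner_smul_right, map_inv₀, Complex.conj_ofReal]
    have hxval : ((‖w s₀‖ : ℂ))⁻¹ * (((‖w s₀‖ : ℂ))⁻¹ * ⟪w s₀, B (w s₀)⟫)
        = (((‖w s₀‖ ^ 2)⁻¹ : ℝ) : ℂ) * ⟪w s₀, B (w s₀)⟫ := by
      push_cast; ring
    rw [hxval]
    apply Complex.ext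
    · rw [Complex.re_ofReal_mul, ← hFs₀]
      simp only [hF, Complex.ofReal_re]
      ring
    · rw [Complex.im_ofReal_mul, hwim s₀, mul_zero, Complex.ofReal_im]

/-- The numerical range of an `n × n` complex matrix `A`:
`W(A) = {⟨A x, x⟩ : x ∈ ℂⁿ, ‖x‖ = 1}` (written with Mathlib's inner product, which is
conjugate-linear in the first argument, as `⟪x, A x⟫`). -/
noncomputable def numRange {n : ℕ} (A : Matrix (Fin n) (Fin n) ℂ) : Set ℂ :=
  {z : ℂ | ∃ x : EuclideanSpace ℂ (Fin n), ‖x‖ = 1 ∧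
    z = (inner ℂ x (Matrix.toEuclideanLin A x) : ℂ)}

/-- Toeplitz–Hausdorff theorem: the numerical range of any square complex matrix is convex. -/
theorem numRange_convex (n : ℕ) (hn : 1 ≤ n) (A : Matrix (Fin n) (Fin n) ℂ) :
    Convex ℝ (numRange A) := by
  intro z₁ hz₁ z₂ hz₂ a b ha hb hab
  obtain ⟨u, hu, huz⟩ := hz₁
  obtain ⟨v, hv, hvz⟩ := hz₂
  set T : EuclideanSpace ℂ (Fin n) →ₗ[ℂ] EuclideanSpace ℂ (Fin n) := Matrix.toEuclideanLin A
    with hT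
  by_cases hzz : z₁ = z₂
  · subst hzz
    refine ⟨u, hu, ?_⟩
    rw [← add_smul, hab, one_smul]
    exact huz
  · have hd : z₁ - z₂ ≠ 0 := sub_ne_zero.mpr hzz
    set B : EuclideanSpace ℂ (Fin n) →ₗ[ℂ] EuclideanSpace ℂ (Fin n) :=
      (z₁ - z₂)⁻¹ • (T - z₂ • LinearMap.id) with hB
    have hBval : ∀ x : EuclideanSpace ℂ (Fin n), ‖x‖ = 1 →
        ⟪x, B x⟫ = (z₁ - z₂)⁻¹ * (⟪x, T x⟫ - z₂) := by
      intro x hx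
      rw [hB]
      simp only [LinearMap.smul_apply, LinearMap.sub_apply, LinearMap.id_apply,
        inner_smul_right, inner_sub_right]
      have hxx : ⟪x, x⟫ = 1 := by
        rw [inner_self_eq_norm_sq_to_K, hx]
        norm_num
      rw [hxx]
      ring
    have hgu : ⟪u, B u⟫ = 1 := by
      rw [hBval u hu, ← huz]
      field_simp
    have hgv : ⟪v, B v⟫ = 0 := by
      rw [hBval v hv, ← hvz]
      simp
    have hta : a ∈ Set.Icc (0:ℝ) 1 := ⟨ha, by linarith⟩
    obtain ⟨x, hxn, hxB⟩ := key_lemma B u v hu hv hgu hgv a hta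
    refine ⟨x, hxn, ?_⟩
    rw [hBval x hxn] at hxB
    have hb' : b = 1 - a := by linarith
    have : ⟪x, T x⟫ = (a : ℂ) * (z₁ - z₂) + z₂ := by
      field_simp at hxB
      linear_combination hxB
    rw [hT] at this
    rw [this, hb']
    simp only [Complex.real_smul]
    push_cast
    ring
end

section
/- Let A be a 2×2 complex matrix whose characteristic polynomial is (X − a)(X − b) for a, b ∈ ℂ. Then the numerical range of A is the closed elliptical disk with foci a and b and minor axis of length (tr(A*A) − |a|² − |b|²)^{1/2}; explicitly, W(A) = { z ∈ ℂ : |z − a| + |z − b| ≤ √( tr(A*A) − |a|² − |b|² + |a − b|² ) }, where A* denotes the conjugate transpose of A. -/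
open scoped Matrix

private lemma le_of_sq_le' {t L : ℝ} (h : t^2 ≤ L^2) (hL : 0 ≤ L) : t ≤ L := by
  nlinarith [sq_nonneg (L - t), sq_nonneg (L + t)]

private lemma star_ineq (f β x y L R : ℝ) (hL0 : 0 ≤ L) (hR0 : 0 ≤ R)
    (hL : L^2 = (x-f)^2 + y^2) (hR : R^2 = (x+f)^2 + y^2)
    (hsum2 : (L+R)^2 ≤ 4*(f^2+β^2)) :
    β^2*x^2 + (f^2+β^2)*y^2 ≤ (f^2+β^2)*β^2 := by
  have h2 : L*R ≤ 2*(f^2+β^2) - x^2 - y^2 - f^2 := by nlinarith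
  have h3 : (L*R)^2 ≤ (2*(f^2+β^2) - x^2 - y^2 - f^2)^2 := by
    nlinarith [mul_nonneg hL0 hR0]
  have hLR2 : (L*R)^2 = ((x-f)^2+y^2) * ((x+f)^2+y^2) := by rw [mul_pow, hL, hR]
  nlinarith [h3, hLR2]

set_option maxHeartbeats 1600000 in
private lemma ell_core_fwd (f β x y s : ℝ) (hf : 0 ≤ f) (hβ : 0 ≤ β)
    (hT : 0 < f^2+β^2)
    (hs : s^2 ≤ 1) (hc : (x - f*s)^2 + y^2 = β^2 * (1 - s^2)) :
    Real.sqrt ((x-f)^2 + y^2) + Real.sqrt ((x+f)^2 + y^2) ≤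
      2 * Real.sqrt (f^2+β^2) := by
  have hT0 : (0:ℝ) ≤ f^2+β^2 := le_of_lt hT
  have hσ : (Real.sqrt (f^2+β^2))^2 = f^2+β^2 := Real.sq_sqrt hT0
  have hσ0 : 0 ≤ Real.sqrt (f^2+β^2) := Real.sqrt_nonneg _
  have hσσ : Real.sqrt (f^2+β^2) * Real.sqrt (f^2+β^2) = f^2+β^2 := by nlinarith [hσ]
  have key1 : (f^2+β^2) * ((x-f)^2 + y^2)
      = ((f^2+β^2) - f*x)^2 - (f*x - (f^2+β^2)*s)^2 := by
    linear_combination (f^2+β^2) * hc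
  have key2 : (f^2+β^2) * ((x+f)^2 + y^2)
      = ((f^2+β^2) + f*x)^2 - (f*x - (f^2+β^2)*s)^2 := by
    linear_combination (f^2+β^2) * hc
  have key3 : β^2*x^2 + (f^2+β^2)*y^2
      = (f^2+β^2)*β^2 - (f*x - (f^2+β^2)*s)^2 := by
    linear_combination (f^2+β^2) * hc
  have hx2 : x^2 ≤ f^2 + β^2 := by
    rcases eq_or_lt_of_le hβ with hb | hb
    · have hβ0 : β = 0 := hb.symm
      have h0 : (x - f*s)^2 + y^2 = 0 := by rw [hc, hβ0]; ring
      have hxs : x = f*s := by nlinarith [sq_nonneg (x - f*s), sq_nonneg y]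
      have hx2' : x^2 = f^2*s^2 := by rw [hxs]; ring
      nlinarith [mul_nonneg (sq_nonneg f) (by linarith : (0:ℝ) ≤ 1 - s^2)]
    · clear key1 key2 hc
      nlinarith [key3, sq_nonneg y, sq_nonneg (f*x - (f^2+β^2)*s), mul_pos hb hb]
  have hfx1 : f*x ≤ f^2+β^2 := by linarith [sq_nonneg (f - x), sq_nonneg β]
  have hfx2 : -(f^2+β^2) ≤ f*x := by linarith [sq_nonneg (f + x), sq_nonneg β]
  have b1 : Real.sqrt (f^2+β^2) * Real.sqrt ((x-f)^2+y^2) ≤ (f^2+β^2) - f*x := by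
    rw [← Real.sqrt_mul hT0]
    calc Real.sqrt ((f^2+β^2) * ((x-f)^2+y^2))
        ≤ Real.sqrt (((f^2+β^2) - f*x)^2) := by
          apply Real.sqrt_le_sqrt
          linarith [key1, sq_nonneg (f*x - (f^2+β^2)*s)]
      _ = (f^2+β^2) - f*x := by
          rw [Real.sqrt_sq_eq_abs]; exact abs_of_nonneg (by linarith)
  have b2 : Real.sqrt (f^2+β^2) * Real.sqrt ((x+f)^2+y^2) ≤ (f^2+β^2) + f*x := by
    rw [← Real.sqrt_mul hT0]
    calc Real.sqrt ((f^2+β^2) * ((x+f)^2+y^2))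
        ≤ Real.sqrt (((f^2+β^2) + f*x)^2) := by
          apply Real.sqrt_le_sqrt
          linarith [key2, sq_nonneg (f*x - (f^2+β^2)*s)]
      _ = (f^2+β^2) + f*x := by
          rw [Real.sqrt_sq_eq_abs]; exact abs_of_nonneg (by linarith)
  have hσpos : 0 < Real.sqrt (f^2+β^2) := Real.sqrt_pos.2 hT
  have final : Real.sqrt (f^2+β^2) * (Real.sqrt ((x-f)^2+y^2) + Real.sqrt ((x+f)^2+y^2))
      ≤ Real.sqrt (f^2+β^2) * (2 * Real.sqrt (f^2+β^2)) := by
    nlinarith [b1, b2, hσσ]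
  exact le_of_mul_le_mul_left final hσpos

set_option maxHeartbeats 1600000 in
private lemma ell_core_bwd (f β x y : ℝ) (hf : 0 ≤ f) (hβ : 0 ≤ β)
    (hT : 0 < f^2+β^2)
    (hsum : Real.sqrt ((x-f)^2 + y^2) + Real.sqrt ((x+f)^2 + y^2) ≤
      2 * Real.sqrt (f^2+β^2)) :
    ∃ s : ℝ, s^2 ≤ 1 ∧ (x - f*s)^2 + y^2 = β^2 * (1 - s^2) := by
  have hT0 : (0:ℝ) ≤ f^2+β^2 := le_of_lt hT
  have hσ : (Real.sqrt (f^2+β^2))^2 = f^2+β^2 := Real.sq_sqrt hT0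
  have hσ0 : 0 ≤ Real.sqrt (f^2+β^2) := Real.sqrt_nonneg _
  have hσσ : Real.sqrt (f^2+β^2) * Real.sqrt (f^2+β^2) = f^2+β^2 := by nlinarith [hσ]
  set σ := Real.sqrt (f^2+β^2) with hσdef
  set L := Real.sqrt ((x-f)^2 + y^2) with hLdef
  set R := Real.sqrt ((x+f)^2 + y^2) with hRdef
  have hL0 : 0 ≤ L := Real.sqrt_nonneg _
  have hR0 : 0 ≤ R := Real.sqrt_nonneg _
  have hL : L^2 = (x-f)^2 + y^2 := Real.sq_sqrt (by positivity)
  have hR : R^2 = (x+f)^2 + y^2 := Real.sq_sqrt (by positivity)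
  have hsum2 : (L+R)^2 ≤ 4*(f^2+β^2) := by nlinarith [hσ, hσ0, hL0, hR0, hsum]
  have hstar := star_ineq f β x y L R hL0 hR0 hL hR hsum2
  have hxmf : x - f ≤ L := le_of_sq_le' (by nlinarith [hL, sq_nonneg y]) hL0
  have hfmx : f - x ≤ L := le_of_sq_le' (by nlinarith [hL, sq_nonneg y]) hL0
  have hxpf : x + f ≤ R := le_of_sq_le' (by nlinarith [hR, sq_nonneg y]) hR0
  have hnxf : -(x+f) ≤ R := le_of_sq_le' (by nlinarith [hR, sq_nonneg y]) hR0
  have hxσ : x ≤ σ := by linarith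
  have hnxσ : -x ≤ σ := by linarith
  have hfσ : f ≤ σ := le_of_sq_le' (by nlinarith [sq_nonneg β]) hσ0
  have hfx1 : f*x ≤ f^2+β^2 := by
    calc f*x ≤ f*σ := mul_le_mul_of_nonneg_left hxσ hf
      _ ≤ σ*σ := mul_le_mul_of_nonneg_right hfσ hσ0
      _ = f^2+β^2 := hσσ
  have hfx2 : -(f^2+β^2) ≤ f*x := by
    have h6 : f*(-x) ≤ f*σ := mul_le_mul_of_nonneg_left hnxσ hf
    have h7 : f*σ ≤ σ*σ := mul_le_mul_of_nonneg_right hfσ hσ0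
    nlinarith [hσσ, h6, h7]
  set D := (f^2+β^2)*β^2 - β^2*x^2 - (f^2+β^2)*y^2 with hDdef
  have hD0 : 0 ≤ D := by rw [hDdef]; linarith
  set r := Real.sqrt D with hrdef
  have hr0 : 0 ≤ r := Real.sqrt_nonneg _
  have hr2 : r^2 = D := Real.sq_sqrt hD0
  have hrle : r ≤ (f^2+β^2) - f*x := by
    have hDle : D ≤ ((f^2+β^2) - f*x)^2 := by
      rw [hDdef]; nlinarith [hL, sq_nonneg (x-f), sq_nonneg y]
    calc r ≤ Real.sqrt (((f^2+β^2) - f*x)^2) := Real.sqrt_le_sqrt hDle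
      _ = (f^2+β^2) - f*x := by
        rw [Real.sqrt_sq_eq_abs]; exact abs_of_nonneg (by linarith)
  refine ⟨(f*x + r)/(f^2+β^2), ?_, ?_⟩
  · rw [div_pow, div_le_one (by positivity)]
    nlinarith [hr0, hrle, hfx2]
  · have hTne : (f^2+β^2) ≠ 0 := by positivity
    field_simp
    linear_combination (f^2+β^2)*hr2

lemma ell_core (f β x y : ℝ) (hf : 0 ≤ f) (hβ : 0 ≤ β) :
    (∃ s : ℝ, s^2 ≤ 1 ∧ (x - f*s)^2 + y^2 = β^2 * (1 - s^2)) ↔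
    Real.sqrt ((x-f)^2 + y^2) + Real.sqrt ((x+f)^2 + y^2) ≤
      2 * Real.sqrt (f^2+β^2) := by
  have hT0 : (0:ℝ) ≤ f^2 + β^2 := by positivity
  rcases eq_or_lt_of_le hT0 with hT | hT
  · have hf0 : f = 0 := by nlinarith
    have hβ0 : β = 0 := by nlinarith
    subst hf0; subst hβ0
    simp only [mul_zero, zero_mul, sub_zero, add_zero, zero_add, ne_eq, OfNat.ofNat_ne_zero,
      not_false_eq_true, zero_pow, Real.sqrt_zero]
    constructor
    · rintro ⟨s, hs, hc⟩
      have hx : x = 0 := by nlinarith [sq_nonneg x, sq_nonneg y]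
      have hy : y = 0 := by nlinarith [sq_nonneg x, sq_nonneg y]
      simp [hx, hy]
    · intro hsum
      have hs0 : Real.sqrt (x^2+y^2) = 0 := by
        have := Real.sqrt_nonneg (x^2+y^2); linarith
      have h1 : x^2 + y^2 = 0 := (Real.sqrt_eq_zero (by positivity)).1 hs0
      have hx : x = 0 := by nlinarith [sq_nonneg x, sq_nonneg y]
      have hy : y = 0 := by nlinarith [sq_nonneg x, sq_nonneg y]
      exact ⟨0, by norm_num, by simp [hx, hy]⟩
  · exact ⟨fun ⟨s, hs, hc⟩ => ell_core_fwd f β x y s hf hβ hT hs hc,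
      ell_core_bwd f β x y hf hβ hT⟩





set_option maxHeartbeats 1600000 in
lemma tri_mem (a b c z : ℂ) :
    (∃ (p : ℝ) (w : ℂ), 0 ≤ p ∧ p ≤ 1 ∧ ‖w‖ ^ 2 = p * (1 - p) ∧
        z = a * p + b * (1 - p) + c * w) ↔
    ‖z - a‖ + ‖z - b‖ ≤
      Real.sqrt (‖c‖ ^ 2 + ‖a - b‖ ^ 2) := by
  classical
  set f : ℝ := ‖b - a‖ / 2 with hfdef
  set β : ℝ := ‖c‖ / 2 with hβdef
  have hf0 : 0 ≤ f := by positivity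
  have hβ0 : 0 ≤ β := by positivity
  set e : ℂ := if a = b then 1 else (b - a) / (‖b - a‖ : ℂ) with hedef
  have he : ‖e‖ = 1 := by
    rw [hedef]
    split_ifs with h
    · simp
    · rw [norm_div, Complex.norm_real, norm_norm]
      exact div_self (norm_ne_zero_iff.2 (sub_ne_zero.2 (fun hh => h hh.symm)))
  have hee : e * (starRingEnd ℂ) e = 1 := by
    rw [Complex.mul_conj, Complex.normSq_eq_norm_sq, he]; norm_num
  have heq2 : b - a = 2*(f:ℂ)*e := by
    rw [hedef]
    split_ifs with h
    · simp [h, hfdef]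
    · have hne : (‖b - a‖ : ℂ) ≠ 0 := by
        simpa using norm_ne_zero_iff.2 (sub_ne_zero.2 (fun hh => h hh.symm))
      field_simp [hfdef]
      rw [hfdef]; push_cast; ring
  set m : ℂ := (a + b)/2 with hmdef
  set ζ : ℂ := (z - m) * (starRingEnd ℂ) e with hζdef
  have hee' : (starRingEnd ℂ) e * e = 1 := by rw [mul_comm]; exact hee
  have hζe : ζ * e = z - m := by
    rw [hζdef, mul_assoc, hee', mul_one]
  set x : ℝ := ζ.re with hxdef
  set y : ℝ := ζ.im with hydef
  have hnsq : ∀ t : ℝ, Complex.normSq (ζ - (t:ℂ)) = (x - t)^2 + y^2 := by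
    intro t
    simp [Complex.normSq_apply, Complex.sub_re, Complex.sub_im, hxdef, hydef]
    ring
  have habs1 : ‖z - a‖ = Real.sqrt ((x+f)^2 + y^2) := by
    have h1 : z - a = (ζ + (f:ℂ)) * e := by
      have : z - a = (z - m) + (f:ℂ)*e := by
        rw [hmdef]; linear_combination (1/2 : ℂ) * heq2
      rw [this, ← hζe]; ring
    rw [h1, norm_mul, he, mul_one, Complex.norm_def]
    congr 1
    have := hnsq (-f)
    push_cast at this ⊢
    simpa [sub_neg_eq_add] using this
  have habs2 : ‖z - b‖ = Real.sqrt ((x-f)^2 + y^2) := by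
    have h1 : z - b = (ζ - (f:ℂ)) * e := by
      have : z - b = (z - m) - (f:ℂ)*e := by
        rw [hmdef]; linear_combination (-1/2 : ℂ) * heq2
      rw [this, ← hζe]; ring
    rw [h1, norm_mul, he, mul_one, Complex.norm_def]
    congr 1
    exact hnsq f
  have hrhs : Real.sqrt (‖c‖ ^ 2 + ‖a - b‖ ^ 2)
      = 2 * Real.sqrt (f^2 + β^2) := by
    have hab : ‖a - b‖ = 2*f := by
      rw [norm_sub_rev, hfdef]; ring
    have hc : ‖c‖ = 2*β := by rw [hβdef]; ring
    rw [hab, hc, show (2*β)^2 + (2*f)^2 = 4*(f^2+β^2) by ring]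
    rw [show (4:ℝ)*(f^2+β^2) = 2^2*(f^2+β^2) by ring,
      Real.sqrt_mul (by positivity), Real.sqrt_sq (by norm_num)]
  rw [habs1, habs2, hrhs]
  rw [show Real.sqrt ((x+f)^2+y^2) + Real.sqrt ((x-f)^2+y^2)
    = Real.sqrt ((x-f)^2+y^2) + Real.sqrt ((x+f)^2+y^2) by ring]
  rw [← ell_core f β x y hf0 hβ0]
  constructor
  · rintro ⟨p, w, hp0, hp1, hw, hz⟩
    refine ⟨1 - 2*p, by nlinarith, ?_⟩
    have hzm : z - m = ((f*(1-2*p) : ℝ) : ℂ)*e + c*w := by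
      rw [hz, hmdef]; push_cast; linear_combination ((1:ℂ)/2 - (p:ℂ)) * heq2
    have hζs : ζ - ((f*(1-2*p) : ℝ) : ℂ) = c*w*(starRingEnd ℂ) e := by
      rw [hζdef, hzm]; push_cast
      linear_combination ((f:ℂ)*(1-2*(p:ℂ))) * hee
    have h2 : Complex.normSq (ζ - ((f*(1-2*p) : ℝ) : ℂ)) = (x - f*(1-2*p))^2 + y^2 :=
      hnsq _
    rw [hζs] at h2
    rw [map_mul, map_mul] at h2
    have hnse : Complex.normSq ((starRingEnd ℂ) e) = 1 := by
      rw [Complex.normSq_conj, Complex.normSq_eq_norm_sq, he]; norm_num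
    have hnsw : Complex.normSq w = p*(1-p) := by rw [← Complex.sq_norm, hw]
    have hnsc : Complex.normSq c = 4*β^2 := by
      rw [Complex.normSq_eq_norm_sq, hβdef]; ring
    rw [hnse, hnsw, hnsc] at h2
    rw [← h2]; ring
  · rintro ⟨s, hs, hcon⟩
    have hp0 : (0:ℝ) ≤ (1-s)/2 := by nlinarith
    have hp1 : (1-s)/2 ≤ 1 := by nlinarith
    have hz1 : z = ζ * e + m := by rw [hζe]; ring
    by_cases hc : c = 0
    · have hβz : β = 0 := by rw [hβdef, hc]; simp
      have h0 : (x - f*s)^2 + y^2 = 0 := by rw [hcon, hβz]; ring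
      have hx0 : x = f*s := by nlinarith [sq_nonneg (x - f*s), sq_nonneg y]
      have hy0 : y = 0 := by nlinarith [sq_nonneg (x - f*s), sq_nonneg y]
      have hzeta : ζ = ((f*s : ℝ) : ℂ) := by
        apply Complex.ext <;>
          simp only [Complex.ofReal_re, Complex.ofReal_im, ← hxdef, ← hydef] <;>
          [exact hx0; exact hy0]
      refine ⟨(1-s)/2, ((Real.sqrt (((1-s)/2) * (1 - (1-s)/2)) : ℝ) : ℂ), hp0, hp1, ?_, ?_⟩
      · rw [Complex.norm_real, Real.norm_eq_abs, abs_of_nonneg (Real.sqrt_nonneg _),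
          Real.sq_sqrt (by nlinarith)]
      · rw [hc, hz1, hzeta, hmdef]; push_cast
        linear_combination (-(s : ℂ)/2) * heq2
    · have hcabs : ‖c‖ ≠ 0 := norm_ne_zero_iff.2 hc
      have hβne : β ≠ 0 := by rw [hβdef]; exact div_ne_zero hcabs two_ne_zero
      refine ⟨(1-s)/2, (ζ - ((f*s : ℝ) : ℂ))*e/c, hp0, hp1, ?_, ?_⟩
      · rw [norm_div, norm_mul, he, mul_one, div_pow, Complex.sq_norm, hnsq, hcon]
        have h4 : ‖c‖ ^2 = 4*β^2 := by rw [hβdef]; ring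
        rw [h4]; field_simp; ring
      · rw [mul_div_cancel₀ _ hc, hz1, hmdef]; push_cast
        linear_combination (-(s : ℂ)/2) * heq2





lemma numRange_mem (A : Matrix (Fin 2) (Fin 2) ℂ) (z : ℂ) :
    z ∈ numRange A ↔ ∃ x0 x1 : ℂ,
      Complex.normSq x0 + Complex.normSq x1 = 1 ∧
      z = (starRingEnd ℂ) x0 * (A 0 0 * x0 + A 0 1 * x1)
        + (starRingEnd ℂ) x1 * (A 1 0 * x0 + A 1 1 * x1) := by
  constructor
  · rintro ⟨x, hx, hz⟩
    refine ⟨x 0, x 1, ?_, ?_⟩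
    · have hS : (0:ℝ) ≤ ∑ i, ‖x i‖^2 := by positivity
      have h1 : Real.sqrt (∑ i, ‖x i‖^2) = 1 := by rw [← EuclideanSpace.norm_eq]; exact hx
      have h2 : (∑ i, ‖x i‖^2) = 1 := by
        have h3 := Real.sq_sqrt hS
        rw [h1] at h3; simpa using h3.symm
      rw [Fin.sum_univ_two] at h2
      simpa [Complex.normSq_eq_norm_sq] using h2
    · rw [hz]
      simp [Matrix.toEuclideanLin_apply, PiLp.inner_apply, Matrix.mulVec,
        Fin.sum_univ_two, dotProduct, RCLike.inner_apply, mul_comm, Matrix.vecHead, Matrix.vecTail]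
  · rintro ⟨x0, x1, hn, hz⟩
    refine ⟨(WithLp.equiv 2 (Fin 2 → ℂ)).symm ![x0, x1], ?_, ?_⟩
    · rw [EuclideanSpace.norm_eq]
      simp only [WithLp.equiv_symm_apply, PiLp.toLp_apply, Fin.sum_univ_two,
        Matrix.cons_val_zero, Matrix.cons_val_one, Matrix.head_cons]
      rw [show ‖x0‖^2 + ‖x1‖^2 = 1 by
        simpa [Complex.normSq_eq_norm_sq] using hn]
      exact Real.sqrt_one
    · rw [hz]
      simp [Matrix.toEuclideanLin_apply, PiLp.inner_apply, Matrix.mulVec,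
        Fin.sum_univ_two, dotProduct, RCLike.inner_apply, mul_comm, Matrix.vecHead, Matrix.vecTail]



-- reconstruction of a vector in the orthonormal basis v, u = (-w1, w0)
lemma recon0 (v0 v1 w0 w1 t0 t1 : ℂ) (hN : w0*v0 + w1*v1 = 1) :
    t0 = (w0*t0+w1*t1)*v0 + (-v1*t0+v0*t1)*(-w1) := by linear_combination (-t0)*hN

lemma recon1 (v0 v1 w0 w1 t0 t1 : ℂ) (hN : w0*v0 + w1*v1 = 1) :
    t1 = (w0*t0+w1*t1)*v1 + (-v1*t0+v0*t1)*w0 := by linear_combination (-t1)*hN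

-- quadratic form in the basis
lemma decomp_z (A00 A01 A10 A11 a bb cc v0 v1 w0 w1 x0 x1 y0 y1 : ℂ)
    (hN : w0*v0 + w1*v1 = 1)
    (hv0 : A00*v0 + A01*v1 = a*v0) (hv1 : A10*v0 + A11*v1 = a*v1)
    (hu0 : A00*(-w1) + A01*w0 = cc*v0 + bb*(-w1))
    (hu1 : A10*(-w1) + A11*w0 = cc*v1 + bb*w0) :
    y0*(A00*x0+A01*x1) + y1*(A10*x0+A11*x1)
      = a*((v0*y0+v1*y1)*(w0*x0+w1*x1)) + bb*((-w1*y0+w0*y1)*(-v1*x0+v0*x1))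
        + cc*((v0*y0+v1*y1)*(-v1*x0+v0*x1)) := by
  linear_combination (-(y0*(A00*x0+A01*x1) + y1*(A10*x0+A11*x1)))*hN
    + ((w0*x0+w1*x1)*y0)*hv0 + ((w0*x0+w1*x1)*y1)*hv1
    + ((-v1*x0+v0*x1)*y0)*hu0 + ((-v1*x0+v0*x1)*y1)*hu1

-- trace in the basis
lemma decomp_tr (A00 A01 A10 A11 a bb cc v0 v1 w0 w1 : ℂ)
    (hN : w0*v0 + w1*v1 = 1)
    (hv0 : A00*v0 + A01*v1 = a*v0) (hv1 : A10*v0 + A11*v1 = a*v1)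
    (hu0 : A00*(-w1) + A01*w0 = cc*v0 + bb*(-w1))
    (hu1 : A10*(-w1) + A11*w0 = cc*v1 + bb*w0) :
    A00 + A11 = a + bb := by
  linear_combination w0*hv0 + w1*hv1 - v1*hu0 + v0*hu1 + (a + bb - A00 - A11)*hN

-- trace of Aᴴ*A in the basis
lemma decomp_tr2 (A00 A01 A10 A11 B00 B01 B10 B11 a bb cc ac bc cco v0 v1 w0 w1 : ℂ)
    (hN : w0*v0 + w1*v1 = 1)
    (hv0 : A00*v0 + A01*v1 = a*v0) (hv1 : A10*v0 + A11*v1 = a*v1)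
    (hu0 : A00*(-w1) + A01*w0 = cc*v0 + bb*(-w1))
    (hu1 : A10*(-w1) + A11*w0 = cc*v1 + bb*w0)
    (hcv0 : B00*w0 + B01*w1 = ac*w0) (hcv1 : B10*w0 + B11*w1 = ac*w1)
    (hcu0 : B00*(-v1) + B01*v0 = cco*w0 + bc*(-v1))
    (hcu1 : B10*(-v1) + B11*v0 = cco*w1 + bc*v0) :
    B00*A00 + B01*A01 + B10*A10 + B11*A11 = ac*a + cco*cc + bc*bb := by
  linear_combination (B00*w0+B01*w1)*hv0 + (B10*w0+B11*w1)*hv1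
    + (B00*(-v1)+B01*v0)*hu0 + (B10*(-v1)+B11*v0)*hu1
    + (a*v0)*hcv0 + (a*v1)*hcv1 + (cc*v0+bb*(-w1))*hcu0 + (cc*v1+bb*w0)*hcu1
    + (ac*a + cco*cc + bc*bb - (B00*A00+B01*A01+B10*A10+B11*A11))*hN

-- norm identity
lemma decomp_norm (v0 v1 w0 w1 x0 x1 y0 y1 : ℂ) (hN : w0*v0 + w1*v1 = 1) :
    (v0*y0+v1*y1)*(w0*x0+w1*x1) + (-w1*y0+w0*y1)*(-v1*x0+v0*x1) = y0*x0 + y1*x1 := by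
  linear_combination (y0*x0+y1*x1)*hN

set_option maxHeartbeats 3200000 in
/-- Elliptical range theorem: if the characteristic polynomial of a `2 × 2` matrix `A` is
`(X - a)(X - b)`, then `W(A)` is the closed elliptical disk with foci `a`, `b` and minor axis
of length `(tr(A*A) - |a|² - |b|²)^{1/2}`. -/
theorem elliptical_range (A : Matrix (Fin 2) (Fin 2) ℂ) (a b : ℂ)
    (h : A.charpoly = (Polynomial.X - Polynomial.C a) * (Polynomial.X - Polynomial.C b)) :
    numRange A = {z : ℂ | ‖z - a‖ + ‖z - b‖ ≤
      Real.sqrt ((Aᴴ * A).trace.re - ‖a‖ ^ 2 - ‖b‖ ^ 2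
        + ‖a - b‖ ^ 2)} := by
  classical
  have hexp : (Polynomial.X - Polynomial.C a) * (Polynomial.X - Polynomial.C b)
      = Polynomial.X^2 - (Polynomial.C a + Polynomial.C b)*Polynomial.X
        + Polynomial.C a * Polynomial.C b := by ring
  have htr' : A 0 0 + A 1 1 = a + b := by
    have h1 := Matrix.trace_eq_neg_charpoly_coeff A
    rw [h, hexp] at h1
    rw [← Matrix.trace_fin_two, h1, ← Polynomial.C_mul,
      show Fintype.card (Fin 2) - 1 = 1 from by simp]
    simp [Polynomial.coeff_add, Polynomial.coeff_sub, Polynomial.coeff_X_pow,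
      Polynomial.coeff_mul_X, Polynomial.coeff_C]
  have hdet' : A 0 0 * A 1 1 - A 0 1 * A 1 0 = a * b := by
    have h1 := Matrix.det_eq_sign_charpoly_coeff A
    rw [h, hexp] at h1
    rw [← Matrix.det_fin_two, h1, ← Polynomial.C_mul,
      show Fintype.card (Fin 2) = 2 from by simp]
    simp [Polynomial.coeff_add, Polynomial.coeff_sub, Polynomial.coeff_X_pow,
      Polynomial.coeff_mul_X, Polynomial.coeff_C]
  -- eigenvector for a
  have e00 : (1 : Matrix (Fin 2) (Fin 2) ℂ) 0 0 = 1 := Matrix.one_apply_eq 0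
  have e11 : (1 : Matrix (Fin 2) (Fin 2) ℂ) 1 1 = 1 := Matrix.one_apply_eq 1
  have e01 : (1 : Matrix (Fin 2) (Fin 2) ℂ) 0 1 = 0 := Matrix.one_apply_ne (by decide)
  have e10 : (1 : Matrix (Fin 2) (Fin 2) ℂ) 1 0 = 0 := Matrix.one_apply_ne (by decide)
  have hdet0 : (A - a • (1 : Matrix (Fin 2) (Fin 2) ℂ)).det = 0 := by
    rw [Matrix.det_fin_two]
    simp only [Matrix.sub_apply, Matrix.smul_apply, smul_eq_mul, e00, e01, e10, e11]
    linear_combination hdet' - a*htr'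
  obtain ⟨v, hvne, hveq⟩ := Matrix.exists_mulVec_eq_zero_iff.2 hdet0
  have hveq2 : A *ᵥ v = a • v := by
    rwa [Matrix.sub_mulVec, Matrix.smul_mulVec, Matrix.one_mulVec, sub_eq_zero] at hveq
  have hAv0 : A 0 0 * v 0 + A 0 1 * v 1 = a * v 0 := by
    have h0 := congrFun hveq2 0
    simp only [Matrix.mulVec, dotProduct, Fin.sum_univ_two, Pi.smul_apply,
      smul_eq_mul] at h0
    linear_combination h0
  have hAv1 : A 1 0 * v 0 + A 1 1 * v 1 = a * v 1 := by
    have h0 := congrFun hveq2 1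
    simp only [Matrix.mulVec, dotProduct, Fin.sum_univ_two, Pi.smul_apply,
      smul_eq_mul] at h0
    linear_combination h0
  -- normalize
  have hvS : 0 < Complex.normSq (v 0) + Complex.normSq (v 1) := by
    have hor : v 0 ≠ 0 ∨ v 1 ≠ 0 := by
      by_contra hcon
      push_neg at hcon
      apply hvne
      funext i
      fin_cases i <;> simp [hcon.1, hcon.2]
    have h0 := Complex.normSq_nonneg (v 0)
    have h1 := Complex.normSq_nonneg (v 1)
    rcases hor with hi | hi
    · have := Complex.normSq_pos.2 hi; linarith
    · have := Complex.normSq_pos.2 hi; linarith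
  set S := Complex.normSq (v 0) + Complex.normSq (v 1) with hSdef
  set r : ℝ := (Real.sqrt S)⁻¹ with hrdef
  have hsS : Real.sqrt S * Real.sqrt S = S := Real.mul_self_sqrt hvS.le
  have hsne : Real.sqrt S ≠ 0 := ne_of_gt (Real.sqrt_pos.2 hvS)
  have hrS : (r*r) * S = 1 := by
    rw [hrdef]; field_simp
    rw [sq, hsS]
  set V0 : ℂ := (r:ℂ) * v 0 with hV0def
  set V1 : ℂ := (r:ℂ) * v 1 with hV1def
  set w0 : ℂ := (starRingEnd ℂ) V0 with hw0def
  set w1 : ℂ := (starRingEnd ℂ) V1 with hw1def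
  have hNV : w0*V0 + w1*V1 = 1 := by
    rw [hw0def, hw1def, ← Complex.normSq_eq_conj_mul_self, ← Complex.normSq_eq_conj_mul_self,
      hV0def, hV1def, Complex.normSq_mul, Complex.normSq_mul, Complex.normSq_ofReal]
    have : r * r * Complex.normSq (v 0) + r * r * Complex.normSq (v 1) = 1 := by
      rw [hSdef] at hrS; linear_combination hrS
    exact_mod_cast this
  have hv0 : A 0 0 * V0 + A 0 1 * V1 = a * V0 := by
    rw [hV0def, hV1def]; linear_combination (r:ℂ) * hAv0
  have hv1 : A 1 0 * V0 + A 1 1 * V1 = a * V1 := by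
    rw [hV0def, hV1def]; linear_combination (r:ℂ) * hAv1
  -- the rest of the orthonormal basis
  set t0 : ℂ := A 0 0 * (-w1) + A 0 1 * w0 with ht0def
  set t1 : ℂ := A 1 0 * (-w1) + A 1 1 * w0 with ht1def
  set cc : ℂ := w0*t0 + w1*t1 with hccdef
  set bb : ℂ := -V1*t0 + V0*t1 with hbbdef
  have hu0 : A 0 0 * (-w1) + A 0 1 * w0 = cc*V0 + bb*(-w1) := by
    rw [← ht0def, hccdef, hbbdef, ht0def, ht1def]
    exact recon0 V0 V1 w0 w1 _ _ hNV
  have hu1 : A 1 0 * (-w1) + A 1 1 * w0 = cc*V1 + bb*w0 := by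
    rw [← ht1def, hccdef, hbbdef, ht0def, ht1def]
    exact recon1 V0 V1 w0 w1 _ _ hNV
  have htrdec := decomp_tr (A 0 0) (A 0 1) (A 1 0) (A 1 1) a bb cc V0 V1 w0 w1
    hNV hv0 hv1 hu0 hu1
  have hbb : bb = b := by linear_combination htr' - htrdec
  -- conjugated hypotheses
  have hcv0 : (starRingEnd ℂ) (A 0 0) * w0 + (starRingEnd ℂ) (A 0 1) * w1
      = (starRingEnd ℂ) a * w0 := by
    have h5 := congrArg (starRingEnd ℂ) hv0
    simpa only [map_add, map_mul, ← hw0def, ← hw1def] using h5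
  have hcv1 : (starRingEnd ℂ) (A 1 0) * w0 + (starRingEnd ℂ) (A 1 1) * w1
      = (starRingEnd ℂ) a * w1 := by
    have h5 := congrArg (starRingEnd ℂ) hv1
    simpa only [map_add, map_mul, ← hw0def, ← hw1def] using h5
  have hcu0 : (starRingEnd ℂ) (A 0 0) * (-V1) + (starRingEnd ℂ) (A 0 1) * V0
      = (starRingEnd ℂ) cc * w0 + (starRingEnd ℂ) bb * (-V1) := by
    have h5 := congrArg (starRingEnd ℂ) hu0
    simpa only [map_add, map_mul, map_neg, hw0def, hw1def, Complex.conj_conj] using h5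
  have hcu1 : (starRingEnd ℂ) (A 1 0) * (-V1) + (starRingEnd ℂ) (A 1 1) * V0
      = (starRingEnd ℂ) cc * w1 + (starRingEnd ℂ) bb * V0 := by
    have h5 := congrArg (starRingEnd ℂ) hu1
    simpa only [map_add, map_mul, map_neg, hw0def, hw1def, Complex.conj_conj] using h5
  have htrH2 := decomp_tr2 (A 0 0) (A 0 1) (A 1 0) (A 1 1)
    ((starRingEnd ℂ) (A 0 0)) ((starRingEnd ℂ) (A 0 1)) ((starRingEnd ℂ) (A 1 0))
    ((starRingEnd ℂ) (A 1 1)) a bb cc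
    ((starRingEnd ℂ) a) ((starRingEnd ℂ) bb) ((starRingEnd ℂ) cc) V0 V1 w0 w1
    hNV hv0 hv1 hu0 hu1 hcv0 hcv1 hcu0 hcu1
  have htrH : (Aᴴ * A).trace = ((starRingEnd ℂ) (A 0 0)) * A 0 0
      + ((starRingEnd ℂ) (A 0 1)) * A 0 1 + ((starRingEnd ℂ) (A 1 0)) * A 1 0
      + ((starRingEnd ℂ) (A 1 1)) * A 1 1 := by
    rw [Matrix.trace_fin_two]
    simp only [Matrix.mul_apply, Matrix.conjTranspose_apply, Fin.sum_univ_two,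
      RCLike.star_def]
    ring
  have htrHval : (Aᴴ * A).trace
      = ((Complex.normSq a + Complex.normSq cc + Complex.normSq b : ℝ) : ℂ) := by
    rw [htrH, htrH2, hbb]
    push_cast
    rw [Complex.normSq_eq_conj_mul_self, Complex.normSq_eq_conj_mul_self,
      Complex.normSq_eq_conj_mul_self]
  have hrad : (Aᴴ * A).trace.re - ‖a‖^2 - ‖b‖^2
      + ‖a-b‖^2 = ‖cc‖^2 + ‖a-b‖^2 := by
    rw [htrHval, Complex.ofReal_re]
    simp only [← Complex.sq_norm]
    ring
  ext z
  rw [Set.mem_setOf_eq, hrad, ← tri_mem a b cc z, numRange_mem]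
  constructor
  · rintro ⟨x0, x1, hn, hz⟩
    set y0 := (starRingEnd ℂ) x0 with hy0def
    set y1 := (starRingEnd ℂ) x1 with hy1def
    set α := w0*x0 + w1*x1 with hαdef
    set βv := -V1*x0 + V0*x1 with hβvdef
    set cα := V0*y0 + V1*y1 with hcαdef
    set cβ := -w1*y0 + w0*y1 with hcβdef
    have hconjα : (starRingEnd ℂ) α = cα := by
      rw [hαdef, hcαdef, hy0def, hy1def, hw0def, hw1def]
      simp only [map_add, map_mul, Complex.conj_conj]
      try ring
    have hconjβ : (starRingEnd ℂ) βv = cβ := by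
      rw [hβvdef, hcβdef, hy0def, hy1def, hw0def, hw1def]
      simp only [map_add, map_mul, map_neg, Complex.conj_conj]
      try ring
    have hdz := decomp_z (A 0 0) (A 0 1) (A 1 0) (A 1 1) a bb cc V0 V1 w0 w1 x0 x1 y0 y1
      hNV hv0 hv1 hu0 hu1
    have hnorm := decomp_norm V0 V1 w0 w1 x0 x1 y0 y1 hNV
    have hsum : Complex.normSq α + Complex.normSq βv = 1 := by
      have h5 : ((Complex.normSq α + Complex.normSq βv : ℝ) : ℂ) = 1 := by
        push_cast
        rw [Complex.normSq_eq_conj_mul_self, Complex.normSq_eq_conj_mul_self,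
          hconjα, hconjβ, hαdef, hβvdef, hcαdef, hcβdef, hnorm, hy0def, hy1def]
        rw [show (starRingEnd ℂ) x0 * x0 = ((Complex.normSq x0 : ℝ) : ℂ) from
          (Complex.normSq_eq_conj_mul_self).symm,
          show (starRingEnd ℂ) x1 * x1 = ((Complex.normSq x1 : ℝ) : ℂ) from
          (Complex.normSq_eq_conj_mul_self).symm]
        exact_mod_cast congrArg (fun t : ℝ => (t : ℂ)) hn
      exact_mod_cast h5
    refine ⟨Complex.normSq α, (starRingEnd ℂ) α * βv, Complex.normSq_nonneg _,
      by nlinarith [Complex.normSq_nonneg βv], ?_, ?_⟩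
    · rw [Complex.sq_norm, Complex.normSq_mul, Complex.normSq_conj,
        show Complex.normSq βv = 1 - Complex.normSq α from by linarith]
    · rw [hz, hdz, hbb, hconjα]
      rw [show cα * α = ((Complex.normSq α : ℝ) : ℂ) from by
        rw [← hconjα, ← Complex.normSq_eq_conj_mul_self],
        show cβ * βv = ((1 - Complex.normSq α : ℝ) : ℂ) from by
        rw [← hconjβ, ← Complex.normSq_eq_conj_mul_self,
          show Complex.normSq βv = 1 - Complex.normSq α from by linarith]]
      push_cast
      ring
  · rintro ⟨p, w, hp0, hp1, hw, hz⟩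
    have hwns : Complex.normSq w = p*(1-p) := by rw [← Complex.sq_norm, hw]
    by_cases hp : p = 0
    · have hw0' : w = 0 := by
        have h5 : Complex.normSq w = 0 := by rw [hwns, hp]; ring
        exact Complex.normSq_eq_zero.1 h5
      have hzb : z = b := by rw [hz, hp, hw0']; push_cast; ring
      refine ⟨-w1, w0, ?_, ?_⟩
      · rw [Complex.normSq_neg, hw0def, hw1def, Complex.normSq_conj,
          Complex.normSq_conj]
        have h5 : ((Complex.normSq V1 + Complex.normSq V0 : ℝ) : ℂ) = 1 := by
          push_cast
          rw [Complex.normSq_eq_conj_mul_self, Complex.normSq_eq_conj_mul_self]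
          linear_combination hNV
        exact_mod_cast h5
      · have hcw1 : (starRingEnd ℂ) (-w1) = -V1 := by
          rw [hw1def, map_neg, Complex.conj_conj]
        have hcw0 : (starRingEnd ℂ) w0 = V0 := by rw [hw0def, Complex.conj_conj]
        rw [hzb, hcw1, hcw0]
        linear_combination V1*hu0 - V0*hu1 - bb*hNV - hbb
    · have hppos : 0 < p := lt_of_le_of_ne hp0 (Ne.symm hp)
      set α : ℂ := ((Real.sqrt p : ℝ) : ℂ) with hαdef
      have hαne : α ≠ 0 := by
        rw [hαdef]
        exact_mod_cast Real.sqrt_ne_zero'.2 hppos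
      set βc : ℂ := w / α with hβcdef
      have hαconj : (starRingEnd ℂ) α = α := by rw [hαdef]; exact Complex.conj_ofReal _
      have hαns : Complex.normSq α = p := by
        rw [hαdef, Complex.normSq_ofReal, Real.mul_self_sqrt hp0]
      have hαα : α * α = ((p:ℝ) : ℂ) := by
        rw [← hαns, Complex.normSq_eq_conj_mul_self, hαconj]
      have hβns : Complex.normSq βc = 1 - p := by
        rw [hβcdef, Complex.normSq_div, hαns, hwns]
        field_simp
      have hαβ : α * βc = w := by
        rw [hβcdef]; field_simp
      set cβ := (starRingEnd ℂ) βc with hcβdef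
      have hcββ : cβ * βc = ((1 - p : ℝ) : ℂ) := by
        rw [hcβdef, ← Complex.normSq_eq_conj_mul_self, hβns]
      refine ⟨α*V0 + βc*(-w1), α*V1 + βc*w0, ?_, ?_⟩
      · have hy0 : (starRingEnd ℂ) (α*V0 + βc*(-w1)) = α*w0 + cβ*(-V1) := by
          simp only [map_add, map_mul, map_neg, hαconj, hw0def, hw1def,
            Complex.conj_conj, hcβdef]
        have hy1 : (starRingEnd ℂ) (α*V1 + βc*w0) = α*w1 + cβ*V0 := by
          simp only [map_add, map_mul, map_neg, hαconj, hw0def, hw1def,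
            Complex.conj_conj, hcβdef]
        have h5 : ((Complex.normSq (α*V0 + βc*(-w1)) + Complex.normSq (α*V1 + βc*w0) : ℝ) : ℂ)
            = 1 := by
          push_cast
          rw [Complex.normSq_eq_conj_mul_self, Complex.normSq_eq_conj_mul_self, hy0, hy1]
          calc (α*w0 + cβ*(-V1))*(α*V0 + βc*(-w1)) + (α*w1 + cβ*V0)*(α*V1 + βc*w0)
              = (α*α + cβ*βc) * (w0*V0 + w1*V1) := by ring
            _ = 1 := by rw [hNV, hαα, hcββ]; push_cast; ring
        exact_mod_cast h5
      · have hy0 : (starRingEnd ℂ) (α*V0 + βc*(-w1)) = α*w0 + cβ*(-V1) := by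
          simp only [map_add, map_mul, map_neg, hαconj, hw0def, hw1def,
            Complex.conj_conj, hcβdef]
        have hy1 : (starRingEnd ℂ) (α*V1 + βc*w0) = α*w1 + cβ*V0 := by
          simp only [map_add, map_mul, map_neg, hαconj, hw0def, hw1def,
            Complex.conj_conj, hcβdef]
        rw [hy0, hy1, hz]
        have hdz := decomp_z (A 0 0) (A 0 1) (A 1 0) (A 1 1) a bb cc V0 V1 w0 w1
          (α*V0 + βc*(-w1)) (α*V1 + βc*w0) (α*w0 + cβ*(-V1)) (α*w1 + cβ*V0)
          hNV hv0 hv1 hu0 hu1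
        rw [hdz]
        have hA' : w0*(α*V0 + βc*(-w1)) + w1*(α*V1 + βc*w0) = α := by
          linear_combination α*hNV
        have hB' : -V1*(α*V0 + βc*(-w1)) + V0*(α*V1 + βc*w0) = βc := by
          linear_combination βc*hNV
        have hC' : V0*(α*w0 + cβ*(-V1)) + V1*(α*w1 + cβ*V0) = α := by
          linear_combination α*hNV
        have hD' : -w1*(α*w0 + cβ*(-V1)) + w0*(α*w1 + cβ*V0) = cβ := by
          linear_combination cβ*hNV
        rw [hC', hA', hD', hB', hαα, hcββ, hαβ, hbb]
        push_cast
        ring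
end

section
/- Let A be a 2×2 complex matrix whose characteristic polynomial is (X − a)(X − b) for a, b ∈ ℂ. Then tr(A*A) − |a|² − |b|² ≥ 0 and there exists a 2×2 unitary matrix U such that U* A U is the upper-triangular matrix with rows (a, p) and (0, b), where p = (tr(A*A) − |a|² − |b|²)^{1/2} and A* denotes the conjugate transpose of A. -/
open scoped Matrix
open Matrix Polynomial Complex

set_option maxHeartbeats 1000000 in
/-- Schur-type triangularization for `2 × 2` matrices: if the characteristic polynomial of `A`
is `(X - a)(X - b)`, then `tr(A*A) - |a|² - |b|² ≥ 0` and `A` is unitarily equivalent to the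
upper-triangular matrix `[[a, p], [0, b]]` with `p = (tr(A*A) - |a|² - |b|²)^{1/2}`. -/
theorem unitarily_triangularizable (A : Matrix (Fin 2) (Fin 2) ℂ) (a b : ℂ)
    (h : A.charpoly = (Polynomial.X - Polynomial.C a) * (Polynomial.X - Polynomial.C b)) :
    0 ≤ (Aᴴ * A).trace.re - ‖a‖ ^ 2 - ‖b‖ ^ 2 ∧
    ∃ U ∈ Matrix.unitaryGroup (Fin 2) ℂ,
      Uᴴ * A * U =
        !![a, (Real.sqrt ((Aᴴ * A).trace.re - ‖a‖ ^ 2 - ‖b‖ ^ 2) : ℂ);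
           0, b] := by
  classical
  have hexp : (X - C a) * (X - C b) = X ^ 2 - C (a + b) * X + C (a * b) := by
    simp only [C_add, C_mul]; ring
  have htr : A.trace = a + b := by
    have := Matrix.trace_eq_neg_charpoly_coeff A
    rw [h, hexp] at this
    simpa [coeff_X, coeff_C] using this
  have hdetA : A.det = a * b := by
    have := Matrix.det_eq_sign_charpoly_coeff A
    rw [h, hexp] at this
    simpa [coeff_X, coeff_C] using this
  have htr2 : A 0 0 + A 1 1 = a + b := by rw [← Matrix.trace_fin_two, htr]
  have hdet2 : A 0 0 * A 1 1 - A 0 1 * A 1 0 = a * b := by rw [← Matrix.det_fin_two, hdetA]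
  have hdet0 : (A - a • 1).det = 0 := by
    rw [Matrix.det_fin_two]
    simp only [Matrix.sub_apply, Matrix.smul_apply, Matrix.one_apply_eq,
      Matrix.one_apply_ne (by decide : (0 : Fin 2) ≠ 1),
      Matrix.one_apply_ne (by decide : (1 : Fin 2) ≠ 0), smul_eq_mul, mul_one, mul_zero]
    linear_combination hdet2 - a * htr2
  obtain ⟨v, hvne, hv⟩ := (Matrix.exists_mulVec_eq_zero_iff).mpr hdet0
  have hAv : A *ᵥ v = a • v := by
    have h1 : (A - a • 1) *ᵥ v = A *ᵥ v - a • v := by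
      rw [Matrix.sub_mulVec, Matrix.smul_mulVec, Matrix.one_mulVec]
    rw [h1] at hv
    exact sub_eq_zero.mp hv
  have e0 : A 0 0 * v 0 + A 0 1 * v 1 = a * v 0 := by
    have := congrFun hAv 0
    simpa [Matrix.mulVec, dotProduct, Fin.sum_univ_two] using this
  have e1 : A 1 0 * v 0 + A 1 1 * v 1 = a * v 1 := by
    have := congrFun hAv 1
    simpa [Matrix.mulVec, dotProduct, Fin.sum_univ_two] using this
  set N : ℝ := Complex.normSq (v 0) + Complex.normSq (v 1) with hNdef
  have hNpos : 0 < N := by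
    have hvv : v 0 ≠ 0 ∨ v 1 ≠ 0 := by
      by_contra hc
      push_neg at hc
      exact hvne (funext fun i => by fin_cases i <;> simp [hc.1, hc.2])
    rcases hvv with h0 | h0
    · have := Complex.normSq_pos.mpr h0
      have := Complex.normSq_nonneg (v 1)
      linarith
    · have := Complex.normSq_pos.mpr h0
      have := Complex.normSq_nonneg (v 0)
      linarith
  set n : ℝ := Real.sqrt N with hndef
  have hnpos : 0 < n := Real.sqrt_pos.mpr hNpos
  have hn2 : n ^ 2 = N := Real.sq_sqrt hNpos.le
  have hnne : (n : ℂ) ≠ 0 := by exact_mod_cast hnpos.ne'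
  have key : (starRingEnd ℂ) (v 0) * v 0 + (starRingEnd ℂ) (v 1) * v 1 = (n : ℂ) ^ 2 := by
    have : ((n : ℝ) : ℂ) ^ 2 = ((N : ℝ) : ℂ) := by exact_mod_cast congrArg Complex.ofReal hn2
    rw [this, hNdef]
    push_cast
    rw [← Complex.mul_conj (v 0), ← Complex.mul_conj (v 1)]
    ring
  set U1 : Matrix (Fin 2) (Fin 2) ℂ :=
    !![v 0 / n, -((starRingEnd ℂ) (v 1)) / n; v 1 / n, (starRingEnd ℂ) (v 0) / n] with hU1def
  have hU1l : U1ᴴ * U1 = 1 := by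
    ext i j
    fin_cases i <;> fin_cases j <;>
      · simp [hU1def, Matrix.mul_apply, Fin.sum_univ_two, Matrix.conjTranspose_apply,
          Matrix.one_apply, map_div₀, Complex.conj_ofReal]
        field_simp
        first
        | linear_combination key
        | linear_combination -key
        | ring
  have hU1r : U1 * U1ᴴ = 1 := by
    ext i j
    fin_cases i <;> fin_cases j <;>
      · simp [hU1def, Matrix.mul_apply, Fin.sum_univ_two, Matrix.conjTranspose_apply,
          Matrix.one_apply, map_div₀, Complex.conj_ofReal]
        field_simp
        first
        | linear_combination key
        | linear_combination -key
        | ring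
  set B : Matrix (Fin 2) (Fin 2) ℂ := U1ᴴ * A * U1 with hBdef
  have hB00 : B 0 0 = a := by
    simp only [hBdef, hU1def]
    simp [Matrix.mul_apply, Fin.sum_univ_two, Matrix.conjTranspose_apply, map_div₀,
      Complex.conj_ofReal]
    field_simp
    first
    | linear_combination (starRingEnd ℂ) (v 0) * e0 + (starRingEnd ℂ) (v 1) * e1 + a * key
    | linear_combination -((starRingEnd ℂ) (v 0) * e0 + (starRingEnd ℂ) (v 1) * e1 + a * key)
  have hB10 : B 1 0 = 0 := by
    simp only [hBdef, hU1def]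
    simp [Matrix.mul_apply, Fin.sum_univ_two, Matrix.conjTranspose_apply, map_div₀,
      Complex.conj_ofReal]
    field_simp
    first
    | linear_combination (-(v 1)) * e0 + v 0 * e1
    | linear_combination v 1 * e0 - v 0 * e1
    | linear_combination ((n : ℂ) + 1) * ((-(v 1)) * e0 + v 0 * e1)
    | linear_combination ((n : ℂ) + 1) * (v 1 * e0 - v 0 * e1)
    | linear_combination (n : ℂ) * ((-(v 1)) * e0 + v 0 * e1)
    | linear_combination (n : ℂ) * (v 1 * e0 - v 0 * e1)
  have hBtr : B.trace = A.trace := by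
    rw [hBdef, Matrix.trace_mul_cycle, hU1r, Matrix.one_mul]
  have hB11 : B 1 1 = b := by
    have h2 : B 0 0 + B 1 1 = a + b := by rw [← Matrix.trace_fin_two, hBtr, htr]
    rw [hB00] at h2
    linear_combination h2
  set t : ℂ := B 0 1 with htdef
  have hB : B = !![a, t; 0, b] := by
    ext i j
    fin_cases i <;> fin_cases j <;> simp [hB00, hB10, hB11, htdef]
  have hBconj : Bᴴ = U1ᴴ * Aᴴ * U1 := by
    rw [hBdef]
    simp [Matrix.conjTranspose_mul, Matrix.mul_assoc]
  have hfro : (Aᴴ * A).trace = (Bᴴ * B).trace := by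
    have h1 : Bᴴ * B = U1ᴴ * (Aᴴ * A) * U1 := by
      rw [hBconj, hBdef]
      calc U1ᴴ * Aᴴ * U1 * (U1ᴴ * A * U1)
          = U1ᴴ * Aᴴ * (U1 * U1ᴴ) * A * U1 := by simp only [Matrix.mul_assoc]
        _ = U1ᴴ * (Aᴴ * A) * U1 := by rw [hU1r]; simp only [Matrix.mul_one, Matrix.mul_assoc]
    rw [h1, Matrix.trace_mul_cycle, hU1r, Matrix.one_mul]
  have htrB : (Bᴴ * B).trace = ((Complex.normSq a : ℝ) : ℂ) + Complex.normSq t + Complex.normSq b := by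
    rw [hB]
    simp [Matrix.trace_fin_two, Matrix.mul_apply, Fin.sum_univ_two, Matrix.conjTranspose_apply]
    rw [← Complex.mul_conj (a), ← Complex.mul_conj (t), ← Complex.mul_conj (b)]
    ring
  have hre : (Aᴴ * A).trace.re = Complex.normSq a + Complex.normSq t + Complex.normSq b := by
    rw [hfro, htrB]
    simp [← Complex.ofReal_add]
  have hkey2 : (Aᴴ * A).trace.re - ‖a‖ ^ 2 - ‖b‖ ^ 2 = Complex.normSq t := by
    rw [hre, Complex.sq_norm, Complex.sq_norm]; ring
  have hsqrt : Real.sqrt ((Aᴴ * A).trace.re - ‖a‖ ^ 2 - ‖b‖ ^ 2)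
      = ‖t‖ := by
    rw [hkey2, ← Complex.norm_def]
  refine ⟨by rw [hkey2]; exact Complex.normSq_nonneg t, ?_⟩
  -- phase fix
  set c : ℂ := if t = 0 then 1 else (starRingEnd ℂ) t / ((‖t‖ : ℝ) : ℂ) with hcdef
  have hc1 : (starRingEnd ℂ) c * c = 1 := by
    rw [hcdef]
    split_ifs with ht0
    · simp
    · have habs : ((‖t‖ : ℝ) : ℂ) ≠ 0 := by
        exact_mod_cast (norm_ne_zero_iff.mpr ht0)
      rw [map_div₀, Complex.conj_ofReal, RingHomCompTriple.comp_apply]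
      field_simp
      rw [RingHom.id_apply, Complex.mul_conj, ← Complex.sq_norm]
      push_cast
      ring
  have hc2 : t * c = ((‖t‖ : ℝ) : ℂ) := by
    rw [hcdef]
    split_ifs with ht0
    · simp [ht0]
    · have habs : ((‖t‖ : ℝ) : ℂ) ≠ 0 := by
        exact_mod_cast (norm_ne_zero_iff.mpr ht0)
      rw [mul_div_assoc', Complex.mul_conj]
      rw [← Complex.sq_norm]
      field_simp
      ring
      push_cast
      ring
  set D : Matrix (Fin 2) (Fin 2) ℂ := !![(1 : ℂ), 0; 0, c] with hDdef
  have hDconj : Dᴴ = !![(1 : ℂ), 0; 0, (starRingEnd ℂ) c] := by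
    ext i j
    fin_cases i <;> fin_cases j <;> simp [hDdef, Matrix.conjTranspose_apply]
  refine ⟨U1 * D, ?_, ?_⟩
  · rw [Matrix.mem_unitaryGroup_iff']
    show ((U1 * D)ᴴ) * (U1 * D) = 1
    rw [Matrix.conjTranspose_mul]
    calc Dᴴ * U1ᴴ * (U1 * D) = Dᴴ * (U1ᴴ * U1) * D := by simp only [Matrix.mul_assoc]
      _ = Dᴴ * D := by rw [hU1l]; simp only [Matrix.mul_one, Matrix.mul_assoc]
      _ = 1 := by
          rw [hDconj, hDdef]
          ext i j
          fin_cases i <;> fin_cases j <;>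
            simp [Matrix.mul_apply, Fin.sum_univ_two, Matrix.one_apply, hc1]
  · have hmain : (U1 * D)ᴴ * A * (U1 * D) = Dᴴ * B * D := by
      rw [Matrix.conjTranspose_mul, hBdef]
      simp only [Matrix.mul_assoc]
    rw [hmain, hB, hDconj, hDdef, hsqrt]
    ext i j
    fin_cases i <;> fin_cases j <;>
      simp [Matrix.mul_apply, Fin.sum_univ_two, hc2]
    · linear_combination b * hc1
end

section
/- If A is an n×n complex matrix that is normal (i.e., A*A = AA*, where A* is the conjugate transpose), then the numerical range W(A) equals the convex hull (over ℝ) of the set of eigenvalues of A, i.e., W(A) = convexHull(spectrum of A in ℂ). -/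
open scoped Matrix

lemma toEuclideanLin_mul' {n : ℕ} (M N : Matrix (Fin n) (Fin n) ℂ) :
    Matrix.toEuclideanLin (M * N) =
      (Matrix.toEuclideanLin M) ∘ₗ (Matrix.toEuclideanLin N) := by
  apply LinearMap.ext
  intro x
  simp [Matrix.toEuclideanLin_apply, Matrix.mulVec_mulVec]

open Module.End in
set_option maxHeartbeats 1000000 in
lemma exists_jointEigenbasis {𝕜 E : Type*} [RCLike 𝕜] [NormedAddCommGroup E]
    [InnerProductSpace 𝕜 E] [FiniteDimensional 𝕜 E] {n : ℕ}
    (hn : Module.finrank 𝕜 E = n) (B C : E →ₗ[𝕜] E)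
    (hB : B.IsSymmetric) (hC : C.IsSymmetric) (hBC : Commute B C) :
    ∃ b : OrthonormalBasis (Fin n) 𝕜 E, ∀ i, ∃ β γ : 𝕜,
      B (b i) = β • b i ∧ C (b i) = γ • b i := by
  classical
  set V₀ : 𝕜 × 𝕜 → Submodule 𝕜 E :=
    fun i => eigenspace B i.2 ⊓ eigenspace C i.1 with hV₀
  have hInt : DirectSum.IsInternal V₀ :=
    LinearMap.IsSymmetric.directSum_isInternal_of_commute hB hC hBC
  haveI : Fintype {i : 𝕜 × 𝕜 // V₀ i ≠ ⊥} :=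
    hInt.submodule_iSupIndep.fintypeNeBotOfFiniteDimensional
  set V : {i : 𝕜 × 𝕜 // V₀ i ≠ ⊥} → Submodule 𝕜 E := fun j => V₀ j.1 with hV
  have hFam0 := LinearMap.IsSymmetric.orthogonalFamily_eigenspace_inf_eigenspace hB hC
  have hFam : OrthogonalFamily 𝕜 (fun j => V j) (fun j => (V j).subtypeₗᵢ) :=
    fun i j hij => hFam0 (Subtype.coe_injective.ne hij)
  have hVint : DirectSum.IsInternal V := by
    rw [DirectSum.isInternal_submodule_iff_iSupIndep_and_iSup_eq_top]
    refine ⟨hInt.submodule_iSupIndep.comp Subtype.coe_injective, ?_⟩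
    rw [hV, iSup_ne_bot_subtype V₀]
    exact hInt.submodule_iSup_eq_top
  refine ⟨hVint.subordinateOrthonormalBasis hn hFam, fun i => ?_⟩
  have hmem : hVint.subordinateOrthonormalBasis hn hFam i ∈
      V (hVint.subordinateOrthonormalBasisIndex hn i hFam) :=
    hVint.subordinateOrthonormalBasis_subordinate hn i hFam
  exact ⟨(hVint.subordinateOrthonormalBasisIndex hn i hFam).1.2,
    (hVint.subordinateOrthonormalBasisIndex hn i hFam).1.1,
    mem_eigenspace_iff.mp hmem.1, mem_eigenspace_iff.mp hmem.2⟩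

open Module.End LinearMap in
lemma normal_eigenbasis (n : ℕ) (A : Matrix (Fin n) (Fin n) ℂ)
    (hA : Aᴴ * A = A * Aᴴ) :
    ∃ (b : OrthonormalBasis (Fin n) ℂ (EuclideanSpace ℂ (Fin n))) (μ : Fin n → ℂ),
      ∀ i, Matrix.toEuclideanLin A (b i) = μ i • b i := by
  classical
  set T : EuclideanSpace ℂ (Fin n) →ₗ[ℂ] EuclideanSpace ℂ (Fin n) :=
    Matrix.toEuclideanLin A with hTdef
  set S : EuclideanSpace ℂ (Fin n) →ₗ[ℂ] EuclideanSpace ℂ (Fin n) :=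
    LinearMap.adjoint T with hSdef
  have hSA : S = Matrix.toEuclideanLin Aᴴ :=
    (Matrix.toEuclideanLin_conjTranspose_eq_adjoint A).symm
  have hST : S * T = T * S := by
    have h1 : S * T = Matrix.toEuclideanLin (Aᴴ * A) := by
      rw [hSA, toEuclideanLin_mul']; rfl
    have h2 : T * S = Matrix.toEuclideanLin (A * Aᴴ) := by
      rw [hSA, toEuclideanLin_mul']; rfl
    rw [h1, h2, hA]
  set B : EuclideanSpace ℂ (Fin n) →ₗ[ℂ] EuclideanSpace ℂ (Fin n) :=
    (2:ℂ)⁻¹ • (T + S) with hBdef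
  set C : EuclideanSpace ℂ (Fin n) →ₗ[ℂ] EuclideanSpace ℂ (Fin n) :=
    ((2:ℂ)⁻¹ * Complex.I) • (S - T) with hCdef
  have hstar2 : star ((2:ℂ)⁻¹) = (2:ℂ)⁻¹ := by
    simp [Complex.star_def]
  have hB : B.IsSymmetric := by
    rw [LinearMap.isSymmetric_iff_isSelfAdjoint]
    show star B = B
    rw [hBdef, hSdef, star_smul, star_add, LinearMap.star_eq_adjoint,
      LinearMap.star_eq_adjoint, LinearMap.adjoint_adjoint, hstar2, add_comm]
  have hC : C.IsSymmetric := by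
    rw [LinearMap.isSymmetric_iff_isSelfAdjoint]
    show star C = C
    have hsI : star ((2:ℂ)⁻¹ * Complex.I) = -((2:ℂ)⁻¹ * Complex.I) := by
      simp [Complex.star_def]
    rw [hCdef, hSdef, star_smul, star_sub, LinearMap.star_eq_adjoint,
      LinearMap.star_eq_adjoint, LinearMap.adjoint_adjoint, hsI, neg_smul, ← smul_neg,
      neg_sub]
  have key : (T + S) * (S - T) = (S - T) * (T + S) := by
    simp only [mul_sub, sub_mul, add_mul, mul_add, hST]
    abel
  have hBC : Commute B C := by
    show B * C = C * B
    rw [hBdef, hCdef]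
    simp only [smul_mul_assoc, mul_smul_comm, key, smul_smul]
    congr 1
    ring
  have hTBC : B + Complex.I • C = T := by
    have hI : Complex.I • C = (-(2:ℂ)⁻¹) • (S - T) := by
      rw [hCdef, smul_smul, mul_comm ((2:ℂ)⁻¹), ← mul_assoc, Complex.I_mul_I]
      ring_nf
    rw [hI, hBdef]
    module
  obtain ⟨b, hb⟩ := exists_jointEigenbasis (finrank_euclideanSpace_fin (𝕜 := ℂ) (n := n))
    B C hB hC hBC
  choose β γ hβ hγ using hb
  refine ⟨b, fun i => β i + Complex.I * γ i, fun i => ?_⟩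
  have hTb : T (b i) = B (b i) + Complex.I • C (b i) := by
    rw [← hTBC]; rfl
  show T (b i) = _
  rw [hTb, hβ, hγ, smul_smul, add_smul]

lemma convexHull_range_fin {n : ℕ} (μ : Fin n → ℂ) :
    convexHull ℝ (Set.range μ) =
      {z : ℂ | ∃ w : Fin n → ℝ, (∀ i, 0 ≤ w i) ∧ ∑ i, w i = 1 ∧ z = ∑ i, w i • μ i} := by
  apply Set.Subset.antisymm
  · apply convexHull_min
    · rintro _ ⟨j, rfl⟩
      refine ⟨fun i => if i = j then 1 else 0, fun i => by positivity, by simp, ?_⟩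
      simp [ite_smul]
    · rintro x ⟨wx, hwx0, hwx1, rfl⟩ y ⟨wy, hwy0, hwy1, rfl⟩ a b ha hb hab
      refine ⟨fun i => a * wx i + b * wy i,
        fun i => add_nonneg (mul_nonneg ha (hwx0 i)) (mul_nonneg hb (hwy0 i)), ?_, ?_⟩
      · simp only [Finset.sum_add_distrib, ← Finset.mul_sum, hwx1, hwy1]
        simpa using hab
      · simp only [add_smul, mul_smul, Finset.sum_add_distrib, ← Finset.smul_sum]
  · rintro z ⟨w, hw0, hw1, rfl⟩
    rw [← Finset.univ.centerMass_eq_of_sum_1 μ hw1]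
    exact Finset.univ.centerMass_mem_convexHull (fun i _ => hw0 i)
      (by rw [hw1]; exact zero_lt_one) (fun i _ => Set.mem_range_self i)

lemma repr_apply_eigen {n : ℕ} (A : Matrix (Fin n) (Fin n) ℂ)
    (b : OrthonormalBasis (Fin n) ℂ (EuclideanSpace ℂ (Fin n))) (μ : Fin n → ℂ)
    (hμ : ∀ i, Matrix.toEuclideanLin A (b i) = μ i • b i)
    (x : EuclideanSpace ℂ (Fin n)) (i : Fin n) :
    b.repr (Matrix.toEuclideanLin A x) i = μ i * b.repr x i := by
  have hx : Matrix.toEuclideanLin A x = ∑ j, (μ j * b.repr x j) • b j := by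
    conv_lhs => rw [← b.sum_repr x, map_sum]
    refine Finset.sum_congr rfl fun j _ => ?_
    rw [map_smul, hμ j, smul_smul, mul_comm]
  rw [hx, map_sum]
  simp only [map_smul, OrthonormalBasis.repr_self]
  rw [WithLp.ofLp_sum, Finset.sum_apply i Finset.univ (fun j => ((μ j * b.repr x j) • EuclideanSpace.single j (1:ℂ)).ofLp)]
  simp [EuclideanSpace.single_apply]

lemma inner_formula {n : ℕ} (A : Matrix (Fin n) (Fin n) ℂ)
    (b : OrthonormalBasis (Fin n) ℂ (EuclideanSpace ℂ (Fin n))) (μ : Fin n → ℂ)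
    (hμ : ∀ i, Matrix.toEuclideanLin A (b i) = μ i • b i)
    (x : EuclideanSpace ℂ (Fin n)) :
    (inner ℂ x (Matrix.toEuclideanLin A x) : ℂ) = ∑ i, (‖b.repr x i‖^2 : ℝ) • μ i := by
  have h1 : (inner ℂ x (Matrix.toEuclideanLin A x) : ℂ)
      = inner ℂ (b.repr x) (b.repr (Matrix.toEuclideanLin A x)) := by
    rw [LinearIsometryEquiv.inner_map_map]
  rw [h1, PiLp.inner_apply]
  refine Finset.sum_congr rfl fun i _ => ?_
  rw [repr_apply_eigen A b μ hμ x i]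
  have : (μ i * b.repr x i) * (starRingEnd ℂ) (b.repr x i)
      = (b.repr x i * (starRingEnd ℂ) (b.repr x i)) * μ i := by ring
  rw [RCLike.inner_apply, this, Complex.mul_conj']
  rw [Complex.real_smul]
  norm_cast

open Module.End in
lemma spectrum_eq_range {n : ℕ} (A : Matrix (Fin n) (Fin n) ℂ)
    (b : OrthonormalBasis (Fin n) ℂ (EuclideanSpace ℂ (Fin n))) (μ : Fin n → ℂ)
    (hμ : ∀ i, Matrix.toEuclideanLin A (b i) = μ i • b i) :
    spectrum ℂ A = Set.range μ := by
  have hspec : spectrum ℂ (Matrix.toEuclideanLin A) = spectrum ℂ A :=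
    AlgEquiv.spectrum_eq (Matrix.toLinAlgEquiv (PiLp.basisFun 2 ℂ (Fin n))) A
  ext z
  constructor
  · intro hz
    rw [← hspec, ← Module.End.hasEigenvalue_iff_mem_spectrum] at hz
    obtain ⟨v, hvmem, hv0⟩ := hz.exists_hasEigenvector
    have hTv : Matrix.toEuclideanLin A v = z • v := mem_eigenspace_iff.mp hvmem
    have h2 : ∀ i, μ i * b.repr v i = z * b.repr v i := by
      intro i
      rw [← repr_apply_eigen A b μ hμ v i, hTv, map_smul]
      rfl
    have hvne : ∃ i, b.repr v i ≠ 0 := by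
      by_contra h
      push_neg at h
      apply hv0
      rw [← b.repr.map_eq_zero_iff]
      ext i
      simpa using h i
    obtain ⟨i, hi⟩ := hvne
    exact ⟨i, mul_right_cancel₀ hi (by rw [h2 i])⟩
  · rintro ⟨i, rfl⟩
    rw [← hspec, ← Module.End.hasEigenvalue_iff_mem_spectrum]
    exact hasEigenvalue_of_hasEigenvector
      ⟨mem_eigenspace_iff.mpr (hμ i), b.orthonormal.ne_zero i⟩

/-- The numerical range of a normal matrix is the convex hull of its eigenvalues. -/
theorem numRange_normal (n : ℕ) (A : Matrix (Fin n) (Fin n) ℂ)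
    (hA : Aᴴ * A = A * Aᴴ) :
    numRange A = convexHull ℝ (spectrum ℂ A) := by
  obtain ⟨b, μ, hμ⟩ := normal_eigenbasis n A hA
  rw [spectrum_eq_range A b μ hμ, convexHull_range_fin]
  ext z
  constructor
  · rintro ⟨x, hx, rfl⟩
    refine ⟨fun i => ‖b.repr x i‖^2, fun i => sq_nonneg _, ?_, inner_formula A b μ hμ x⟩
    have h1 : ‖b.repr x‖ = 1 := by rw [LinearIsometryEquiv.norm_map, hx]
    have h2 : Real.sqrt (∑ i, ‖b.repr x i‖^2) = 1 := by
      rw [← EuclideanSpace.norm_eq]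
      exact h1
    rwa [Real.sqrt_eq_one] at h2
  · rintro ⟨w, hw0, hw1, rfl⟩
    set c : EuclideanSpace ℂ (Fin n) :=
      (WithLp.equiv 2 _).symm (fun i => ((Real.sqrt (w i) : ℝ) : ℂ)) with hc
    have hci : ∀ i, c i = ((Real.sqrt (w i) : ℝ) : ℂ) := fun i => rfl
    have hnorm2 : ∀ i, ‖c i‖^2 = w i := by
      intro i
      rw [hci, Complex.norm_real, Real.norm_eq_abs, abs_of_nonneg (Real.sqrt_nonneg _),
        Real.sq_sqrt (hw0 i)]
    refine ⟨b.repr.symm c, ?_, ?_⟩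
    · rw [LinearIsometryEquiv.norm_map, EuclideanSpace.norm_eq]
      simp only [hnorm2]
      rw [hw1, Real.sqrt_one]
    · rw [inner_formula A b μ hμ]
      simp only [LinearIsometryEquiv.apply_symm_apply, hnorm2]
end

section
/- Let H be a complex Hilbert space and let A be a bounded linear operator on H that is normal (A*A = AA*). Then the closure of the numerical range of A equals the convex hull (over ℝ) of the spectrum of A: closure(W(A)) = convexHull(σ(A)). -/
lemma keyA {H : Type*} [NormedAddCommGroup H] [InnerProductSpace ℂ H]
    [CompleteSpace H] (A : H →L[ℂ] H) (hN : IsStarNormal A) (c : ℂ) (M : ℝ)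
    (hM : ∀ lam ∈ spectrum ℂ A, (c * lam).re ≤ M)
    (x : H) (hx : ‖x‖ = 1) : (c * (inner ℂ x (A x) : ℂ)).re ≤ M := by
  set w : ℂ := (inner ℂ x (A x) : ℂ) with hw
  have hf : Continuous (fun z : ℂ => (((c * z).re : ℝ) : ℂ)) := by fun_prop
  have hg : Continuous (fun z : ℂ => ((Real.sqrt (M - (c * z).re) : ℝ) : ℂ)) := by
    apply Complex.continuous_ofReal.comp
    exact Real.continuous_sqrt.comp (by fun_prop)
  set B : H →L[ℂ] H := cfc (fun z : ℂ => (((c * z).re : ℝ) : ℂ)) A with hBdef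
  set D : H →L[ℂ] H := cfc (fun z : ℂ => ((Real.sqrt (M - (c * z).re) : ℝ) : ℂ)) A with hDdef
  have hDstar : star D = D := by
    rw [hDdef, ← cfc_star _ A]
    exact cfc_congr (fun z _ => by simp [Complex.conj_ofReal])
  have hDD : D * D = algebraMap ℂ (H →L[ℂ] H) (M : ℂ) - B := by
    rw [hDdef, ← cfc_mul _ _ A hg.continuousOn hg.continuousOn]
    have h1 : cfc (fun z : ℂ => ((Real.sqrt (M - (c * z).re) : ℝ) : ℂ)
          * ((Real.sqrt (M - (c * z).re) : ℝ) : ℂ)) A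
        = cfc (fun z : ℂ => (M : ℂ) - (((c * z).re : ℝ) : ℂ)) A := by
      apply cfc_congr
      intro z hz
      have h0 : 0 ≤ M - (c * z).re := by linarith [hM z hz]
      show (((Real.sqrt (M - (c * z).re) : ℝ) : ℂ) * ((Real.sqrt (M - (c * z).re) : ℝ) : ℂ))
        = (M : ℂ) - (((c * z).re : ℝ) : ℂ)
      rw [← Complex.ofReal_mul, Real.mul_self_sqrt h0]
      push_cast
      ring
    rw [h1, cfc_sub (fun _ : ℂ => (M : ℂ)) _ A continuousOn_const hf.continuousOn,
      cfc_const (M : ℂ) A]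
  have hBx : (inner ℂ x (B x) : ℂ) = (((c * w).re : ℝ) : ℂ) := by
    have hfuneq : (fun z : ℂ => (((c * z).re : ℝ) : ℂ))
        = fun z : ℂ => (2⁻¹ * c) * z + (2⁻¹ * (starRingEnd ℂ c)) * (star z) := by
      funext z
      simp only [RCLike.star_def]
      have h1 : c * z + (starRingEnd ℂ) (c * z) = 2 * (((c * z).re : ℝ) : ℂ) := by
        rw [Complex.add_conj]; push_cast; ring
      have h2 : (starRingEnd ℂ) (c * z) = (starRingEnd ℂ) c * (starRingEnd ℂ) z :=
        map_mul _ _ _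
      linear_combination (-2⁻¹ : ℂ) * h1 + (2⁻¹ : ℂ) * h2
    have hc1 : ContinuousOn (fun z : ℂ => (2⁻¹ * c) * z) (spectrum ℂ A) := by fun_prop
    have hc2 : ContinuousOn (fun z : ℂ => (2⁻¹ * (starRingEnd ℂ c)) * (star z))
        (spectrum ℂ A) := by fun_prop
    have hc3 : ContinuousOn (fun z : ℂ => (star z)) (spectrum ℂ A) := by fun_prop
    have hBsplit : B = (2⁻¹ * c) • A + (2⁻¹ * (starRingEnd ℂ c)) • star A := by
      rw [hBdef, hfuneq, cfc_add (a := A) _ _ hc1 hc2, cfc_const_mul_id (2⁻¹ * c) A,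
        cfc_const_mul _ _ A hc3, cfc_star_id (R := ℂ) (a := A)]
    rw [hBsplit]
    simp only [ContinuousLinearMap.add_apply, ContinuousLinearMap.smul_apply,
      ContinuousLinearMap.star_eq_adjoint]
    rw [inner_add_right, inner_smul_right, inner_smul_right,
      ContinuousLinearMap.adjoint_inner_right, ← inner_conj_symm (A x) x]
    have h3 : c * w + (starRingEnd ℂ) (c * w) = 2 * (((c * w).re : ℝ) : ℂ) := by
      rw [Complex.add_conj]; push_cast; ring
    have h4 : (starRingEnd ℂ) (c * w) = (starRingEnd ℂ) c * (starRingEnd ℂ) w :=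
      map_mul _ _ _
    rw [← hw]
    linear_combination (2⁻¹ : ℂ) * h3 - (2⁻¹ : ℂ) * h4
  have hpos : 0 ≤ (inner ℂ x ((D * D) x) : ℂ).re := by
    have hadj : ContinuousLinearMap.adjoint D = D := by
      rw [← ContinuousLinearMap.star_eq_adjoint, hDstar]
    rw [ContinuousLinearMap.mul_apply, ← hadj, ContinuousLinearMap.adjoint_inner_right, hadj]
    simpa using inner_self_nonneg (𝕜 := ℂ) (x := D x)
  rw [hDD] at hpos
  have hxx : (inner ℂ x x : ℂ) = 1 := by
    rw [inner_self_eq_norm_sq_to_K, hx]; norm_num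
  rw [ContinuousLinearMap.sub_apply, inner_sub_right, Algebra.algebraMap_eq_smul_one,
    ContinuousLinearMap.smul_apply, ContinuousLinearMap.one_apply, inner_smul_right,
    hxx, mul_one, hBx] at hpos
  simp only [Complex.sub_re, Complex.ofReal_re] at hpos
  linarith


lemma hullClosed {s : Set ℂ} (hs : IsCompact s) : IsClosed (convexHull ℝ s) := by
  classical
  set K : Set ((Fin 3 → ℝ) × (Fin 3 → ℂ)) :=
    (stdSimplex ℝ (Fin 3)) ×ˢ (Set.univ.pi fun _ => s) with hK
  have hKc : IsCompact K := (isCompact_stdSimplex _ _).prod (isCompact_univ_pi fun _ => hs)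
  set φ : ((Fin 3 → ℝ) × (Fin 3 → ℂ)) → ℂ := fun q => ∑ j, q.1 j • q.2 j with hφdef
  have hφ : Continuous φ :=
    continuous_finset_sum _ fun j _ =>
      (((continuous_apply j).comp continuous_fst).smul ((continuous_apply j).comp continuous_snd))
  have himg : φ '' K = convexHull ℝ s := by
    apply Set.Subset.antisymm
    · rintro _ ⟨⟨wv, pv⟩, hmem, rfl⟩
      rw [hK, Set.mem_prod] at hmem
      obtain ⟨⟨hw0, hw1⟩, hp⟩ := hmem
      exact (convex_convexHull ℝ s).sum_mem (fun i _ => hw0 i) hw1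
        (fun i _ => subset_convexHull ℝ s (hp i (Set.mem_univ i)))
    · intro x hx
      obtain ⟨ι, hfin, z, w, hrange, hai, hwpos, hw1, hsum⟩ :=
        eq_pos_convex_span_of_mem_convexHull hx
      letI := hfin
      have hne : Nonempty ι := by
        by_contra h
        rw [not_nonempty_iff] at h
        rw [Finset.univ_eq_empty, Finset.sum_empty] at hw1
        norm_num at hw1
      have hcard : Fintype.card ι ≤ 3 := by
        have h1 := hai.card_le_finrank_succ
        have h2 : Module.finrank ℝ (vectorSpan ℝ (Set.range z)) ≤ Module.finrank ℝ ℂ :=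
          Submodule.finrank_le _
        rw [Complex.finrank_real_complex] at h2
        omega
      obtain ⟨e⟩ : Nonempty (ι ↪ Fin 3) :=
        Function.Embedding.nonempty_of_card_le (by simpa using hcard)
      obtain ⟨i0⟩ := hne
      set W : Fin 3 → ℝ := fun j => if h : ∃ i, e i = j then w h.choose else 0 with hW
      set P : Fin 3 → ℂ := fun j => if h : ∃ i, e i = j then z h.choose else z i0 with hP
      have hWe : ∀ i : ι, W (e i) = w i := by
        intro i
        have hex : ∃ i', e i' = e i := ⟨i, rfl⟩
        show (if h : ∃ i', e i' = e i then w h.choose else 0) = w i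
        rw [dif_pos hex]
        exact congrArg w (e.injective hex.choose_spec)
      have hPe : ∀ i : ι, P (e i) = z i := by
        intro i
        have hex : ∃ i', e i' = e i := ⟨i, rfl⟩
        show (if h : ∃ i', e i' = e i then z h.choose else z i0) = z i
        rw [dif_pos hex]
        exact congrArg z (e.injective hex.choose_spec)
      have hWoff : ∀ j : Fin 3, j ∉ Finset.univ.image e → W j = 0 := by
        intro j hj
        have : ¬∃ i, e i = j := by
          intro ⟨i, hi⟩
          exact hj (Finset.mem_image.mpr ⟨i, Finset.mem_univ i, hi⟩)
        show (if h : ∃ i, e i = j then w h.choose else 0) = 0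
        rw [dif_neg this]
      have hsum_gen : ∀ {M : Type} [AddCommMonoid M] (G : Fin 3 → M),
          (∀ j ∉ Finset.univ.image e, G j = 0) → ∑ j, G j = ∑ i, G (e i) := by
        intro M _ G hG
        rw [← Finset.sum_subset (Finset.subset_univ (Finset.univ.image e)) (fun j _ hj => hG j hj)]
        rw [Finset.sum_image (fun a _ b _ h => e.injective h)]
      have hWsum : ∑ j, W j = 1 := by
        rw [hsum_gen W hWoff]
        rw [Finset.sum_congr rfl (fun i _ => hWe i)]
        exact hw1
      have hφval : φ (W, P) = x := by
        show ∑ j, W j • P j = x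
        rw [hsum_gen (fun j => W j • P j)
          (fun j hj => by show W j • P j = 0; rw [hWoff j hj, zero_smul])]
        rw [Finset.sum_congr rfl (fun i _ => by
          show W (e i) • P (e i) = w i • z i
          rw [hWe i, hPe i])]
        exact hsum
      refine ⟨(W, P), ?_, hφval⟩
      rw [hK, Set.mem_prod]
      refine ⟨⟨fun j => ?_, hWsum⟩, fun j _ => ?_⟩
      · show 0 ≤ (if h : ∃ i, e i = j then w h.choose else 0)
        split
        · exact (hwpos _).le
        · exact le_refl 0
      · show P j ∈ s
        show (if h : ∃ i, e i = j then z h.choose else z i0) ∈ s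
        split
        · exact hrange (Set.mem_range_self _)
        · exact hrange (Set.mem_range_self _)
  rw [← himg]
  exact (hKc.image hφ).isClosed


/-- The numerical range of a bounded linear operator `A` on a complex Hilbert space:
`W(A) = {⟨A x, x⟩ : x ∈ H, ‖x‖ = 1}`. -/
noncomputable def opNumRange {H : Type*} [NormedAddCommGroup H] [InnerProductSpace ℂ H]
    (A : H →L[ℂ] H) : Set ℂ :=
  {z : ℂ | ∃ x : H, ‖x‖ = 1 ∧ z = (inner ℂ x (A x) : ℂ)}

lemma keyB {H : Type*} [NormedAddCommGroup H] [InnerProductSpace ℂ H]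
    [CompleteSpace H] (A : H →L[ℂ] H) (hN : IsStarNormal A) :
    convexHull ℝ (spectrum ℂ A) ⊆ closure (opNumRange A) := by
  classical
  intro z hz
  rw [convexHull_eq_union_convexHull_finite_subsets] at hz
  simp only [Set.mem_iUnion] at hz
  obtain ⟨u, hu, hzu⟩ := hz
  rw [Finset.convexHull_eq] at hzu
  obtain ⟨w, hw0, hw1, hwz⟩ := hzu
  have hcm : ∑ lam ∈ u, w lam • lam = z := by
    rw [← hwz, Finset.centerMass_eq_of_sum_1 _ _ hw1]
    rfl
  have hnt : Nontrivial H := by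
    by_contra h
    rw [not_nontrivial_iff_subsingleton] at h
    have hu0 : u = ∅ := by
      by_contra hne
      obtain ⟨lam, hlam⟩ := Finset.nonempty_of_ne_empty hne
      have hmem : lam ∈ spectrum ℂ A := hu hlam
      rw [spectrum.mem_iff] at hmem
      exact hmem (isUnit_of_subsingleton _)
    rw [hu0] at hw1
    simp at hw1
  rw [Metric.mem_closure_iff]
  intro ε hε
  obtain ⟨d, hd0, hdsep⟩ : ∃ d > 0, ∀ lam ∈ u, ∀ mu ∈ u, lam ≠ mu → d ≤ dist lam mu := by
    set P := (u ×ˢ u).filter (fun p => p.1 ≠ p.2) with hP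
    by_cases hPne : P.Nonempty
    · obtain ⟨p, hpP, hpmin⟩ := Finset.exists_min_image P (fun p => dist p.1 p.2) hPne
      rw [hP, Finset.mem_filter, Finset.mem_product] at hpP
      refine ⟨dist p.1 p.2, dist_pos.mpr hpP.2, fun lam hl mu hm hne => ?_⟩
      exact hpmin (lam, mu) (by rw [hP]; simp [Finset.mem_product, hl, hm, hne])
    · refine ⟨1, one_pos, fun lam hl mu hm hne => ?_⟩
      exfalso
      exact hPne ⟨(lam, mu), by simp [hP, Finset.mem_product, hl, hm, hne]⟩
  set r : ℝ := min (d / 3) (ε / 4) with hrdef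
  have hr0 : 0 < r := lt_min (by linarith) (by linarith)
  have hr3 : 3 * r ≤ d := by
    have := min_le_left (d / 3) (ε / 4); rw [← hrdef] at this; linarith
  have hrε : r ≤ ε / 4 := min_le_right _ _
  set F : ℂ → ℂ → ℂ := fun lam z => ((max 0 (1 - dist z lam / r) : ℝ) : ℂ) with hFdef
  have hFcont : ∀ lam, Continuous (F lam) := by
    intro lam
    apply Complex.continuous_ofReal.comp
    exact continuous_const.max
      (continuous_const.sub ((continuous_id.dist continuous_const).div_const r))
  have hFnorm : ∀ lam z, ‖F lam z‖ ≤ 1 := by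
    intro lam z
    show ‖((max 0 (1 - dist z lam / r) : ℝ) : ℂ)‖ ≤ 1
    rw [Complex.norm_real, Real.norm_eq_abs, abs_le]
    have h1 : 0 ≤ dist z lam / r := div_nonneg dist_nonneg hr0.le
    constructor
    · linarith [le_max_left (0:ℝ) (1 - dist z lam / r)]
    · exact max_le (by norm_num) (by linarith)
  have hFzero : ∀ lam z, r ≤ dist z lam → F lam z = 0 := by
    intro lam z hd
    show ((max 0 (1 - dist z lam / r) : ℝ) : ℂ) = 0
    norm_cast
    apply max_eq_left
    have : 1 ≤ dist z lam / r := (one_le_div hr0).mpr hd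
    linarith
  have hFone : ∀ lam, F lam lam = 1 := by
    intro lam
    show ((max 0 (1 - dist lam lam / r) : ℝ) : ℂ) = 1
    simp
  have hFdisj : ∀ lam ∈ u, ∀ mu ∈ u, lam ≠ mu → ∀ z, F lam z * F mu z = 0 := by
    intro lam hl mu hm hne z
    rcases le_or_gt r (dist z lam) with h | h
    · rw [hFzero lam z h, zero_mul]
    rcases le_or_gt r (dist z mu) with h' | h'
    · rw [hFzero mu z h', mul_zero]
    exfalso
    have h2 : dist lam mu < 2 * r := by
      calc dist lam mu ≤ dist lam z + dist z mu := dist_triangle _ _ _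
        _ < r + r := by rw [dist_comm lam z]; linarith
        _ = 2 * r := by ring
    have := hdsep lam hl mu hm hne
    linarith
  set T : ℂ → (H →L[ℂ] H) := fun lam => cfc (F lam) A with hTdef
  have hTsa : ∀ lam, star (T lam) = T lam := by
    intro lam
    show star (cfc (F lam) A) = cfc (F lam) A
    rw [← cfc_star (F lam) A]
    refine cfc_congr (fun z _ => ?_)
    show star (((max 0 (1 - dist z lam / r) : ℝ) : ℂ)) = _
    rw [RCLike.star_def, Complex.conj_ofReal]
  have hTadj : ∀ lam, ContinuousLinearMap.adjoint (T lam) = T lam := by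
    intro lam; rw [← ContinuousLinearMap.star_eq_adjoint, hTsa]
  have hTT : ∀ lam ∈ u, ∀ mu ∈ u, lam ≠ mu → T lam * T mu = 0 := by
    intro lam hl mu hm hne
    show cfc (F lam) A * cfc (F mu) A = 0
    rw [← cfc_mul _ _ A (hFcont lam).continuousOn (hFcont mu).continuousOn]
    have h1 : (fun z => F lam z * F mu z) = (fun _ : ℂ => (0 : ℂ)) :=
      funext (hFdisj lam hl mu hm hne)
    rw [h1]
    exact cfc_const_zero ℂ A
  have hAT : ∀ mu, A * T mu = cfc (fun z : ℂ => z * F mu z) A := by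
    intro mu
    have h := cfc_mul (fun z : ℂ => z) (F mu) A (by fun_prop) (hFcont mu).continuousOn
    rw [cfc_id' ℂ A] at h
    exact h.symm
  have hTAT : ∀ lam ∈ u, ∀ mu ∈ u, lam ≠ mu → T lam * (A * T mu) = 0 := by
    intro lam hl mu hm hne
    rw [hAT mu]
    show cfc (F lam) A * cfc (fun z : ℂ => z * F mu z) A = 0
    rw [← cfc_mul _ _ A (hFcont lam).continuousOn
      (by exact (continuous_id.mul (hFcont mu)).continuousOn)]
    have h1 : (fun z => F lam z * (z * F mu z)) = (fun _ : ℂ => (0 : ℂ)) := by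
      funext z
      calc F lam z * (z * F mu z) = (F lam z * F mu z) * z := by ring
        _ = 0 := by rw [hFdisj lam hl mu hm hne z, zero_mul]
    rw [h1]
    exact cfc_const_zero ℂ A
  have hsub : ∀ lam : ℂ, A - algebraMap ℂ (H →L[ℂ] H) lam = cfc (fun z : ℂ => z - lam) A := by
    intro lam
    rw [cfc_sub (fun z : ℂ => z) (fun _ : ℂ => lam) A (by fun_prop) (by fun_prop),
      cfc_id' ℂ A, cfc_const lam A]
  have hATle : ∀ lam ∈ u, ‖(A - algebraMap ℂ (H →L[ℂ] H) lam) * T lam‖ ≤ r := by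
    intro lam _
    rw [hsub lam]
    show ‖cfc (fun z : ℂ => z - lam) A * cfc (F lam) A‖ ≤ r
    rw [← cfc_mul _ _ A (by fun_prop) (hFcont lam).continuousOn]
    apply norm_cfc_le hr0.le
    intro x _
    rcases le_or_gt r (dist x lam) with h | h
    · rw [hFzero lam x h, mul_zero, norm_zero]; exact hr0.le
    · calc ‖(x - lam) * F lam x‖ = ‖x - lam‖ * ‖F lam x‖ := norm_mul _ _
        _ ≤ r * 1 := by
            apply mul_le_mul ?_ (hFnorm lam x) (norm_nonneg _) hr0.le
            rw [← dist_eq_norm]; exact h.le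
        _ = r := mul_one r
  have hTnorm : ∀ lam ∈ u, 1 ≤ ‖T lam‖ := by
    intro lam hl
    have hone : (1 : ℂ) ∈ spectrum ℂ (T lam) := by
      have hspec : spectrum ℂ (T lam) = F lam '' spectrum ℂ A :=
        cfc_map_spectrum (F lam) A hN (hFcont lam).continuousOn
      rw [hspec]
      exact ⟨lam, hu hl, hFone lam⟩
    have := spectrum.norm_le_norm_of_mem hone
    simpa using this
  -- choose good vectors
  have hy : ∀ lam ∈ u, ∃ yv : H, 2⁻¹ * ‖yv‖ < ‖T lam yv‖ := by
    intro lam hl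
    by_contra h
    push_neg at h
    have hb : ‖T lam‖ ≤ 2⁻¹ :=
      ContinuousLinearMap.opNorm_le_bound _ (by norm_num) (fun y => by
        have := h y; rw [mul_comm] at this ⊢; linarith [h y])
    have := hTnorm lam hl
    linarith
  choose! y hy using hy
  set n : ℂ → ℝ := fun lam => ‖T lam (y lam)‖ with hn
  have hnpos : ∀ lam ∈ u, 0 < n lam := by
    intro lam hl
    have := hy lam hl
    have h0 : 0 ≤ 2⁻¹ * ‖y lam‖ := by positivity
    linarith
  set v : ℂ → H := fun lam => (((n lam)⁻¹ : ℝ) : ℂ) • T lam (y lam) with hv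
  have hvnorm : ∀ lam ∈ u, ‖v lam‖ = 1 := by
    intro lam hl
    show ‖(((n lam)⁻¹ : ℝ) : ℂ) • T lam (y lam)‖ = 1
    rw [norm_smul, Complex.norm_real, Real.norm_eq_abs, abs_of_pos (inv_pos.mpr (hnpos lam hl))]
    exact inv_mul_cancel₀ (hnpos lam hl).ne'
  have hvv : ∀ lam ∈ u, (inner ℂ (v lam) (v lam) : ℂ) = 1 := by
    intro lam hl
    rw [inner_self_eq_norm_sq_to_K, hvnorm lam hl]
    norm_num
  have horth : ∀ lam ∈ u, ∀ mu ∈ u, lam ≠ mu → (inner ℂ (v lam) (v mu) : ℂ) = 0 := by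
    intro lam hl mu hm hne
    show (inner ℂ ((((n lam)⁻¹ : ℝ) : ℂ) • T lam (y lam)) ((((n mu)⁻¹ : ℝ) : ℂ) • T mu (y mu)) : ℂ) = 0
    rw [inner_smul_left, inner_smul_right]
    have h1 : (inner ℂ (T lam (y lam)) (T mu (y mu)) : ℂ) = 0 := by
      rw [← hTadj lam, ContinuousLinearMap.adjoint_inner_left, ← ContinuousLinearMap.mul_apply,
        hTT lam hl mu hm hne]
      simp
    rw [h1]
    simp
  have horthA : ∀ lam ∈ u, ∀ mu ∈ u, lam ≠ mu → (inner ℂ (v lam) (A (v mu)) : ℂ) = 0 := by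
    intro lam hl mu hm hne
    show (inner ℂ ((((n lam)⁻¹ : ℝ) : ℂ) • T lam (y lam)) (A ((((n mu)⁻¹ : ℝ) : ℂ) • T mu (y mu))) : ℂ) = 0
    rw [map_smul, inner_smul_left, inner_smul_right]
    have h1 : (inner ℂ (T lam (y lam)) (A (T mu (y mu))) : ℂ) = 0 := by
      rw [← hTadj lam, ContinuousLinearMap.adjoint_inner_left, ← ContinuousLinearMap.mul_apply,
        ← ContinuousLinearMap.mul_apply, mul_assoc, hTAT lam hl mu hm hne]
      simp
    rw [h1]
    simp
  have hdiag : ∀ lam ∈ u, ‖A (v lam) - lam • v lam‖ ≤ 2 * r := by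
    intro lam hl
    have hrep : A (v lam) - lam • v lam
        = (((n lam)⁻¹ : ℝ) : ℂ) • (((A - algebraMap ℂ (H →L[ℂ] H) lam) * T lam) (y lam)) := by
      show A ((((n lam)⁻¹ : ℝ) : ℂ) • T lam (y lam))
          - lam • ((((n lam)⁻¹ : ℝ) : ℂ) • T lam (y lam)) = _
      rw [map_smul]
      rw [ContinuousLinearMap.mul_apply, ContinuousLinearMap.sub_apply,
        Algebra.algebraMap_eq_smul_one, ContinuousLinearMap.smul_apply,
        ContinuousLinearMap.one_apply, smul_sub, smul_comm]
    have hnne : n lam ≠ 0 := (hnpos lam hl).ne'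
    rw [hrep, norm_smul, Complex.norm_real, Real.norm_eq_abs,
      abs_of_pos (inv_pos.mpr (hnpos lam hl))]
    have h1 : ‖((A - algebraMap ℂ (H →L[ℂ] H) lam) * T lam) (y lam)‖ ≤ r * ‖y lam‖ :=
      le_trans (ContinuousLinearMap.le_opNorm _ _)
        (mul_le_mul_of_nonneg_right (hATle lam hl) (norm_nonneg _))
    have h2 : ‖y lam‖ < 2 * n lam := by
      have h3 := hy lam hl
      show ‖y lam‖ < 2 * ‖T lam (y lam)‖
      linarith
    calc (n lam)⁻¹ * ‖((A - algebraMap ℂ (H →L[ℂ] H) lam) * T lam) (y lam)‖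
        ≤ (n lam)⁻¹ * (r * ‖y lam‖) := by
          apply mul_le_mul_of_nonneg_left h1 (by positivity)
      _ ≤ (n lam)⁻¹ * (r * (2 * n lam)) := by
          apply mul_le_mul_of_nonneg_left _ (by positivity)
          exact mul_le_mul_of_nonneg_left h2.le hr0.le
      _ = 2 * r := by
          rw [show (n lam)⁻¹ * (r * (2 * n lam)) = (2 * r) * ((n lam)⁻¹ * n lam) by ring,
            inv_mul_cancel₀ hnne, mul_one]
  have hinnerdiag : ∀ lam ∈ u, ‖(inner ℂ (v lam) (A (v lam)) : ℂ) - lam‖ ≤ 2 * r := by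
    intro lam hl
    have h1 : (inner ℂ (v lam) (A (v lam)) : ℂ) - lam
        = inner ℂ (v lam) (A (v lam) - lam • v lam) := by
      rw [inner_sub_right, inner_smul_right, hvv lam hl, mul_one]
    rw [h1]
    calc ‖(inner ℂ (v lam) (A (v lam) - lam • v lam) : ℂ)‖
        ≤ ‖v lam‖ * ‖A (v lam) - lam • v lam‖ := norm_inner_le_norm _ _
      _ ≤ 1 * (2 * r) := by
          rw [hvnorm lam hl]
          exact mul_le_mul_of_nonneg_left (hdiag lam hl) zero_le_one
      _ = 2 * r := one_mul _
  -- the test vector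
  set s : ℂ → ℂ := fun lam => ((Real.sqrt (w lam) : ℝ) : ℂ) with hs
  set x : H := ∑ lam ∈ u, s lam • v lam with hx
  have hssq : ∀ lam ∈ u, s lam * s lam = ((w lam : ℝ) : ℂ) := by
    intro lam hl
    show ((Real.sqrt (w lam) : ℝ) : ℂ) * ((Real.sqrt (w lam) : ℝ) : ℂ) = _
    rw [← Complex.ofReal_mul, Real.mul_self_sqrt (hw0 lam hl)]
  have hsconj : ∀ lam, (starRingEnd ℂ) (s lam) = s lam := fun lam => Complex.conj_ofReal _
  have hxx : (inner ℂ x x : ℂ) = 1 := by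
    rw [hx, sum_inner]
    have h1 : ∀ lam ∈ u, (inner ℂ (s lam • v lam) (∑ mu ∈ u, s mu • v mu) : ℂ)
        = ((w lam : ℝ) : ℂ) := by
      intro lam hl
      rw [inner_sum]
      rw [Finset.sum_eq_single lam]
      · rw [inner_smul_left, inner_smul_right, hsconj, hvv lam hl, mul_one, hssq lam hl]
      · intro mu hm hne
        rw [inner_smul_left, inner_smul_right, horth lam hl mu hm (Ne.symm hne)]
        ring
      · intro h; exact absurd hl h
    rw [Finset.sum_congr rfl h1, ← Complex.ofReal_sum, hw1]
    norm_num
  have hxnorm : ‖x‖ = 1 := by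
    have h1 := inner_self_eq_norm_sq (𝕜 := ℂ) (x := x)
    rw [hxx] at h1
    have h2 : ‖x‖ ^ 2 = 1 := by simpa using h1.symm
    nlinarith [norm_nonneg x]
  have hxAx : (inner ℂ x (A x) : ℂ) = ∑ lam ∈ u, ((w lam : ℝ) : ℂ) * (inner ℂ (v lam) (A (v lam)) : ℂ) := by
    rw [hx, sum_inner]
    have h1 : ∀ lam ∈ u, (inner ℂ (s lam • v lam) (A (∑ mu ∈ u, s mu • v mu)) : ℂ)
        = ((w lam : ℝ) : ℂ) * (inner ℂ (v lam) (A (v lam)) : ℂ) := by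
      intro lam hl
      rw [map_sum, inner_sum]
      rw [Finset.sum_eq_single lam]
      · rw [map_smul, inner_smul_left, inner_smul_right, hsconj, ← mul_assoc, hssq lam hl]
      · intro mu hm hne
        rw [map_smul, inner_smul_left, inner_smul_right, horthA lam hl mu hm (Ne.symm hne)]
        ring
      · intro h; exact absurd hl h
    exact Finset.sum_congr rfl h1
  refine ⟨(inner ℂ x (A x) : ℂ), ⟨x, hxnorm, rfl⟩, ?_⟩
  rw [Complex.dist_eq]
  have hzsum : z = ∑ lam ∈ u, ((w lam : ℝ) : ℂ) * lam := by
    rw [← hcm]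
    exact Finset.sum_congr rfl (fun lam _ => by rw [Complex.real_smul])
  calc ‖z - (inner ℂ x (A x) : ℂ)‖
      = ‖∑ lam ∈ u, ((w lam : ℝ) : ℂ) * (lam - (inner ℂ (v lam) (A (v lam)) : ℂ))‖ := by
        rw [hzsum, hxAx, ← Finset.sum_sub_distrib]
        congr 1
        exact Finset.sum_congr rfl (fun lam _ => by ring)
    _ ≤ ∑ lam ∈ u, ‖((w lam : ℝ) : ℂ) * (lam - (inner ℂ (v lam) (A (v lam)) : ℂ))‖ :=
        norm_sum_le _ _
    _ ≤ ∑ lam ∈ u, w lam * (2 * r) := by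
        apply Finset.sum_le_sum
        intro lam hl
        rw [norm_mul, Complex.norm_real, Real.norm_eq_abs, abs_of_nonneg (hw0 lam hl)]
        apply mul_le_mul_of_nonneg_left _ (hw0 lam hl)
        rw [← norm_neg, neg_sub]
        exact hinnerdiag lam hl
    _ = 2 * r := by rw [← Finset.sum_mul, hw1, one_mul]
    _ < ε := by linarith


/-- The closure of the numerical range of a bounded normal operator on a complex Hilbert
space is the convex hull of its spectrum. -/
theorem closure_opNumRange_normal {H : Type*} [NormedAddCommGroup H] [InnerProductSpace ℂ H]
    [CompleteSpace H] (A : H →L[ℂ] H)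
    (hA : ContinuousLinearMap.adjoint A * A = A * ContinuousLinearMap.adjoint A) :
    closure (opNumRange A) = convexHull ℝ (spectrum ℂ A) := by
  have hN : IsStarNormal A :=
    ⟨by rw [Commute, SemiconjBy, ContinuousLinearMap.star_eq_adjoint, hA]⟩
  apply Set.Subset.antisymm
  · have hcomp : IsCompact (spectrum ℂ A) := spectrum.isCompact A
    have hclosed : IsClosed (convexHull ℝ (spectrum ℂ A)) := hullClosed hcomp
    have hconv : Convex ℝ (convexHull ℝ (spectrum ℂ A)) := convex_convexHull ℝ _
    intro zeta hzeta
    by_contra hnot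
    obtain ⟨f, t, hft, htf⟩ := geometric_hahn_banach_closed_point hconv hclosed hnot
    set c : ℂ := ((f 1 : ℝ) : ℂ) - ((f Complex.I : ℝ) : ℂ) * Complex.I with hc
    have hfc : ∀ q : ℂ, (c * q).re = f q := by
      intro q
      have h1 : q = q.re • (1 : ℂ) + q.im • Complex.I := by
        simp [Complex.real_smul, Complex.re_add_im]
      calc (c * q).re = q.re * f 1 + q.im * f Complex.I := by
            rw [hc]
            simp [Complex.mul_re, Complex.sub_re, Complex.sub_im, Complex.mul_im]
            ring
        _ = f q := by
            conv_rhs => rw [h1]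
            rw [map_add, map_smul, map_smul, smul_eq_mul, smul_eq_mul]
    have hub : ∀ lam ∈ spectrum ℂ A, (c * lam).re ≤ t := by
      intro lam hl
      rw [hfc]
      exact (hft lam (subset_convexHull ℝ _ hl)).le
    have hW : ∀ q ∈ opNumRange A, (c * q).re ≤ t := by
      rintro q ⟨x, hx, rfl⟩
      exact keyA A hN c t hub x hx
    have hcl : (c * zeta).re ≤ t := by
      have hcont : Continuous (fun q : ℂ => (c * q).re) :=
        Complex.continuous_re.comp (continuous_const.mul continuous_id)
      have hset : closure (opNumRange A) ⊆ {q : ℂ | (c * q).re ≤ t} :=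
        closure_minimal hW (isClosed_le hcont continuous_const)
      exact hset hzeta
    rw [hfc] at hcl
    linarith
  · exact keyB A hN
end

section
/- Let m > 0 and let T be the 2×2 complex matrix with rows (0, m) and (0, 1). Then the numerical range of T is exactly the union of circles W(T) = ⋃_{t ∈ [0,1]} { z ∈ ℂ : |z − (1 − t²)| = m·t·√(1 − t²) }. -/
lemma inner_T_apply (m : ℝ) (x : EuclideanSpace ℂ (Fin 2)) :
    (inner ℂ x (Matrix.toEuclideanLin !![(0:ℂ), (m:ℂ); 0, 1] x) : ℂ) =
      (m : ℂ) * (starRingEnd ℂ) (x 0) * x 1 + (starRingEnd ℂ) (x 1) * x 1 := by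
  simp [Matrix.toEuclideanLin_apply, PiLp.inner_apply, Fin.sum_univ_two, Matrix.mulVec,
    dotProduct, RCLike.inner_apply]
  ring

lemma norm_sq_sum (x : EuclideanSpace ℂ (Fin 2)) (h : ‖x‖ = 1) :
    ‖x 0‖ ^ 2 + ‖x 1‖ ^ 2 = 1 := by
  have := EuclideanSpace.norm_eq x
  rw [h] at this
  have h2 : Real.sqrt (∑ i, ‖x i‖ ^ 2) = 1 := this.symm
  have := Real.sqrt_eq_one.mp h2
  simpa [Fin.sum_univ_two] using this

/-- For `m > 0` and `T = [[0, m], [0, 1]]`, the numerical range `W(T)` is exactly the union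
over `t ∈ [0,1]` of the circles centered at `1 - t²` of radius `m·t·√(1 - t²)`. -/
theorem numRange_as_union_of_circles (m : ℝ) (hm : 0 < m) :
    numRange !![(0 : ℂ), (m : ℂ); 0, 1] =
      ⋃ t ∈ Set.Icc (0 : ℝ) 1,
        {z : ℂ | ‖z - ((1 - t ^ 2 : ℝ) : ℂ)‖ = m * t * Real.sqrt (1 - t ^ 2)} := by
  ext z
  simp only [Set.mem_iUnion, Set.mem_setOf_eq, numRange, exists_prop]
  constructor
  · rintro ⟨x, hx, rfl⟩
    set a := x 0
    set b := x 1
    have habs : ‖a‖ ^ 2 + ‖b‖ ^ 2 = 1 := norm_sq_sum x hx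
    refine ⟨‖a‖, ⟨norm_nonneg a, ?_⟩, ?_⟩
    · nlinarith [norm_nonneg b, sq_nonneg ‖b‖]
    · have hb2 : ‖b‖ ^ 2 = 1 - ‖a‖ ^ 2 := by linarith
      have hcb : (starRingEnd ℂ) b * b = ((1 - ‖a‖ ^ 2 : ℝ) : ℂ) := by
        rw [mul_comm, Complex.mul_conj, ← Complex.sq_norm, hb2]
      rw [inner_T_apply]
      have : (m : ℂ) * (starRingEnd ℂ) a * b + (starRingEnd ℂ) b * b
          - ((1 - ‖a‖ ^ 2 : ℝ) : ℂ) = (m : ℂ) * (starRingEnd ℂ) a * b := by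
        rw [hcb]; ring
      have hsq : Real.sqrt (1 - ‖a‖ ^ 2) = ‖b‖ := by
        rw [← hb2, Real.sqrt_sq (norm_nonneg b)]
      rw [this, hsq]
      simp [map_mul, Complex.norm_conj, Complex.norm_real, abs_of_pos hm]
  · rintro ⟨t, ⟨ht0, ht1⟩, hz⟩
    set w := z - ((1 - t ^ 2 : ℝ) : ℂ) with hw
    set s := Real.sqrt (1 - t ^ 2) with hs
    have hs2 : s ^ 2 = 1 - t ^ 2 := Real.sq_sqrt (by nlinarith)
    have hsnn : 0 ≤ s := Real.sqrt_nonneg _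
    set u : ℂ := if w = 0 then 1 else w / ((‖w‖ : ℝ) : ℂ) with hu
    have habsu : ‖u‖ = 1 := by
      rw [hu]; split
      · simp
      · rename_i hne
        rw [norm_div, Complex.norm_real, norm_norm,
          div_self (ne_of_gt (norm_pos_iff.mpr hne))]
    have hwu : ((‖w‖ : ℝ) : ℂ) * u = w := by
      rw [hu]; split
      · rename_i h0; simp [h0]
      · rename_i hne
        have hne' : ((‖w‖ : ℝ) : ℂ) ≠ 0 := by
          exact_mod_cast (norm_pos_iff.mpr hne).ne'
        rw [mul_comm]
        exact div_mul_cancel₀ w hne'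
    set a : ℂ := (t : ℂ) * (starRingEnd ℂ) u
    set b : ℂ := (s : ℂ)
    refine ⟨(WithLp.equiv 2 (Fin 2 → ℂ)).symm ![a, b], ?_, ?_⟩
    · have haabs : ‖a‖ = t := by
        simp [a, map_mul, Complex.norm_conj, habsu, Complex.norm_real, abs_of_nonneg ht0]
      rw [EuclideanSpace.norm_eq]
      simp only [WithLp.equiv_symm_apply, PiLp.toLp_apply, Fin.sum_univ_two, Matrix.cons_val_zero,
        Matrix.cons_val_one, Matrix.head_cons]
      rw [haabs]
      have : ‖b‖ = s := by simp [b, Complex.norm_real, abs_of_nonneg hsnn]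
      rw [this]
      rw [show t ^ 2 + s ^ 2 = 1 by rw [hs2]; ring]
      exact Real.sqrt_one
    · have hx0 : ((WithLp.equiv 2 (Fin 2 → ℂ)).symm ![a, b]) 0 = a := rfl
      have hx1 : ((WithLp.equiv 2 (Fin 2 → ℂ)).symm ![a, b]) 1 = b := rfl
      rw [inner_T_apply, hx0, hx1]
      have hca : (starRingEnd ℂ) a = (t : ℂ) * u := by
        simp [a, map_mul, Complex.conj_conj, Complex.conj_ofReal]
      have hcb : (starRingEnd ℂ) b * b = ((1 - t ^ 2 : ℝ) : ℂ) := by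
        simp only [b, Complex.conj_ofReal]
        push_cast [← hs2]
        ring
      rw [hca, hcb]
      have : (m : ℂ) * ((t : ℂ) * u) * b = w := by
        rw [← hwu, hz]
        simp only [b]
        push_cast
        ring
      rw [this, hw]
      ring
end

section
/- Let m > 0 and let T be the 2×2 complex matrix with rows (0, m) and (0, 1). Then the numerical range of T is the closed elliptical disk W(T) = { z ∈ ℂ : (Re(z) − 1/2)²/(1 + m²) + (Im(z))²/m² ≤ 1/4 }, i.e., the closed elliptical disk with foci 0 and 1, major semi-axis √(1 + m²)/2 and minor semi-axis m/2. -/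
lemma inner_eval (m : ℝ) (x : EuclideanSpace ℂ (Fin 2)) :
    (inner ℂ x (Matrix.toEuclideanLin !![(0:ℂ),(m:ℂ);0,1] x) : ℂ)
      = (m:ℂ) * ((starRingEnd ℂ) (x 0) * x 1) + (starRingEnd ℂ) (x 1) * x 1 := by
  simp only [Matrix.toEuclideanLin, PiLp.inner_apply, Matrix.mulVec, dotProduct,
    Fin.sum_univ_two, WithLp.equiv, Equiv.refl_apply, RCLike.inner_apply,
    LinearEquiv.trans_apply, Matrix.toLin'_apply, Equiv.refl_symm,
    LinearEquiv.symm_symm, WithLp.linearEquiv_apply, WithLp.linearEquiv_symm_apply]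
  simp [Matrix.mulVec, dotProduct, Fin.sum_univ_two]
  ring

lemma norm_eval (x : EuclideanSpace ℂ (Fin 2)) (h : ‖x‖ = 1) :
    Complex.normSq (x 0) + Complex.normSq (x 1) = 1 := by
  have h2 := EuclideanSpace.norm_eq x
  rw [h] at h2
  have h3 : (∑ i : Fin 2, ‖x i‖^2) = 1 := Real.sqrt_eq_one.mp h2.symm
  rw [Fin.sum_univ_two, Complex.sq_norm,
    Complex.sq_norm] at h3
  exact h3

lemma norm_eval' (a b : ℂ) :
    ‖(WithLp.equiv 2 (Fin 2 → ℂ)).symm ![a, b]‖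
      = Real.sqrt (Complex.normSq a + Complex.normSq b) := by
  rw [EuclideanSpace.norm_eq]
  have e0 : ((WithLp.equiv 2 (Fin 2 → ℂ)).symm ![a, b]) 0 = a := rfl
  have e1 : ((WithLp.equiv 2 (Fin 2 → ℂ)).symm ![a, b]) 1 = b := rfl
  rw [Fin.sum_univ_two, e0, e1,
    Complex.sq_norm, Complex.sq_norm]

set_option maxHeartbeats 1000000 in
/-- For `m > 0` and `T = [[0, m], [0, 1]]`, the numerical range `W(T)` is the closed
elliptical disk `{ z : (Re z - 1/2)²/(1 + m²) + (Im z)²/m² ≤ 1/4 }`, i.e. the closed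
elliptical disk with foci `0` and `1`, major semi-axis `√(1 + m²)/2` and minor
semi-axis `m/2`. -/
theorem numRange_elliptical_disk (m : ℝ) (hm : 0 < m) :
    numRange !![(0 : ℂ), (m : ℂ); 0, 1] =
      {z : ℂ | (z.re - 1 / 2) ^ 2 / (1 + m ^ 2) + z.im ^ 2 / m ^ 2 ≤ 1 / 4} := by
  have hm2 : (0:ℝ) < 1 + m^2 := by positivity
  have hmm : (0:ℝ) < m^2 := by positivity
  ext z
  simp only [numRange, Set.mem_setOf_eq]
  constructor
  · rintro ⟨x, hx, rfl⟩
    rw [inner_eval]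
    have hn := norm_eval x hx
    set a := x 0 with ha
    set b := x 1 with hb
    rw [Complex.normSq_apply, Complex.normSq_apply] at hn
    simp only [Complex.add_re, Complex.add_im, Complex.mul_re, Complex.mul_im,
      Complex.conj_re, Complex.conj_im, Complex.ofReal_re, Complex.ofReal_im]
    rw [div_add_div _ _ (ne_of_gt hm2) (ne_of_gt hmm),
      div_le_div_iff₀ (by positivity) (by norm_num)]
    have hs' : a.re^2 + a.im^2 = 1 - (b.re^2 + b.im^2) := by nlinarith [hn]
    have hst2 : m^2*(1+m^2)*((a.re*b.re + a.im*b.im)^2 + (a.re*b.im - a.im*b.re)^2)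
        = m^2*(1+m^2)*((1 - (b.re^2+b.im^2))*(b.re^2+b.im^2)) := by
      rw [show (a.re*b.re + a.im*b.im)^2 + (a.re*b.im - a.im*b.re)^2
        = (a.re^2+a.im^2)*(b.re^2+b.im^2) from by ring, hs']
    have h1 : (0:ℝ) ≤ m^2 * ((a.re*b.re + a.im*b.im) - m*((b.re^2+b.im^2) - 1/2))^2 := by
      positivity
    nlinarith [h1, hst2]
  · intro hz
    have hF : (z.re - 1/2)^2 * m^2 + z.im^2 * (1+m^2) ≤ (1+m^2)*m^2/4 := by
      rw [div_add_div _ _ (ne_of_gt hm2) (ne_of_gt hmm),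
        div_le_div_iff₀ (by positivity) (by norm_num)] at hz
      nlinarith [hz]
    have hyim : (0:ℝ) ≤ z.im^2 * (1+m^2) := by positivity
    have h49 : m^2*(2*z.re - 1)^2 ≤ m^2*(1+m^2) := by nlinarith [hF, hyim]
    have h49' : (2*z.re - 1)^2 ≤ 1+m^2 := (mul_le_mul_iff_right₀ hmm).mp h49
    have hd : 0 ≤ (2*z.re+m^2)^2 - 4*(1+m^2)*(z.re^2+z.im^2) := by nlinarith [hF]
    have hxlb : 0 ≤ 2*z.re + m^2 := by nlinarith [h49', hmm, hm2, mul_pos hmm hm2]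
    have hxub : 2*z.re + m^2 ≤ 2*(1+m^2) := by nlinarith [h49', hmm, hm2, mul_pos hmm hm2]
    obtain ⟨s, hsdef⟩ : ∃ s : ℝ,
        s = Real.sqrt ((2*z.re+m^2)^2 - 4*(1+m^2)*(z.re^2+z.im^2)) := ⟨_, rfl⟩
    have hs0 : 0 ≤ s := hsdef ▸ Real.sqrt_nonneg _
    have hs2 : s^2 = (2*z.re+m^2)^2 - 4*(1+m^2)*(z.re^2+z.im^2) := by
      rw [hsdef]; exact Real.sq_sqrt hd
    have hsle : s ≤ 2*z.re + m^2 := by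
      rw [hsdef]
      calc Real.sqrt ((2*z.re+m^2)^2 - 4*(1+m^2)*(z.re^2+z.im^2))
          ≤ Real.sqrt ((2*z.re+m^2)^2) :=
            Real.sqrt_le_sqrt (by nlinarith [sq_nonneg z.re, sq_nonneg z.im])
        _ = 2*z.re+m^2 := Real.sqrt_sq hxlb
    obtain ⟨t, htdef⟩ : ∃ t : ℝ, t = (2*z.re + m^2 - s)/(2*(1+m^2)) := ⟨_, rfl⟩
    have ht0 : 0 ≤ t := htdef ▸ div_nonneg (by linarith) (by positivity)
    have ht1 : t ≤ 1 := by rw [htdef, div_le_one (by positivity)]; linarith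
    have h2t : 2*(1+m^2)*t = 2*z.re+m^2 - s := by rw [htdef]; field_simp
    have hteq : (1+m^2)*t^2 - (2*z.re+m^2)*t + (z.re^2+z.im^2) = 0 := by
      have hteq' : 4*(1+m^2)*((1+m^2)*t^2 - (2*z.re+m^2)*t + (z.re^2+z.im^2)) = 0 := by
        linear_combination hs2 + (2*(1+m^2)*t - (2*z.re+m^2) - s) * h2t
      rcases mul_eq_zero.mp hteq' with h | h
      · exact absurd h (by positivity)
      · exact h
    by_cases hzt : z = (t:ℂ)
    · have hre : z.re = t := by rw [hzt]; simp
      have him : z.im = 0 := by rw [hzt]; simp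
      have htt : t*(1-t) = 0 := by
        have h0 : m^2 * (t*(1-t)) = 0 := by
          rw [hre, him] at hteq; linear_combination -hteq
        rcases mul_eq_zero.mp h0 with h | h
        · exact absurd h (ne_of_gt hmm)
        · exact h
      refine ⟨(WithLp.equiv 2 (Fin 2 → ℂ)).symm
        ![(Real.sqrt (1-t) : ℂ), (Real.sqrt t : ℂ)], ?_, ?_⟩
      · rw [norm_eval', Complex.normSq_ofReal, Complex.normSq_ofReal,
          Real.mul_self_sqrt (by linarith : (0:ℝ) ≤ 1 - t), Real.mul_self_sqrt ht0]
        norm_num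
      · rw [inner_eval]
        have e0 : ((WithLp.equiv 2 (Fin 2 → ℂ)).symm
          ![(Real.sqrt (1-t) : ℂ), (Real.sqrt t : ℂ)]) 0 = (Real.sqrt (1-t) : ℂ) := rfl
        have e1 : ((WithLp.equiv 2 (Fin 2 → ℂ)).symm
          ![(Real.sqrt (1-t) : ℂ), (Real.sqrt t : ℂ)]) 1 = (Real.sqrt t : ℂ) := rfl
        rw [e0, e1, Complex.conj_ofReal, Complex.conj_ofReal]
        have hprod : Real.sqrt (1-t) * Real.sqrt t = 0 := by
          rw [← Real.sqrt_mul (by linarith) t, show (1-t)*t = t*(1-t) from by ring, htt,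
            Real.sqrt_zero]
        have hbb : (Real.sqrt t : ℂ) * (Real.sqrt t : ℂ) = (t:ℂ) := by
          rw [← Complex.ofReal_mul, Real.mul_self_sqrt ht0]
        rw [hbb, show ((m:ℂ) * ((Real.sqrt (1-t) : ℂ) * (Real.sqrt t : ℂ))) = 0 from by
          rw [← Complex.ofReal_mul, hprod, Complex.ofReal_zero, mul_zero], zero_add]
        exact hzt
    · have htpos : 0 < t := by
        rcases lt_or_eq_of_le ht0 with h | h
        · exact h
        · exfalso
          apply hzt
          have h0 : z.re^2 + z.im^2 = 0 := by rw [← h] at hteq; linarith [hteq]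
          have hre : z.re = 0 := by nlinarith [sq_nonneg z.re, sq_nonneg z.im]
          have him : z.im = 0 := by nlinarith [sq_nonneg z.re, sq_nonneg z.im]
          rw [← h, Complex.ext_iff]
          simp [hre, him]
      have hnz : Complex.normSq (z - (t:ℂ)) = m^2*t*(1-t) := by
        rw [Complex.normSq_apply]
        simp only [Complex.sub_re, Complex.sub_im, Complex.ofReal_re, Complex.ofReal_im]
        linear_combination hteq
      set a : ℂ := (starRingEnd ℂ) (z - (t:ℂ)) / ((m:ℂ) * (Real.sqrt t : ℂ)) with hadef
      have hden : ((m:ℂ) * (Real.sqrt t : ℂ)) ≠ 0 := by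
        simp only [ne_eq, mul_eq_zero, Complex.ofReal_eq_zero, not_or]
        exact ⟨ne_of_gt hm, ne_of_gt (Real.sqrt_pos.mpr htpos)⟩
      have hna : Complex.normSq a = 1 - t := by
        rw [hadef, Complex.normSq_div, Complex.normSq_conj, hnz, Complex.normSq_mul,
          Complex.normSq_ofReal, Complex.normSq_ofReal, Real.mul_self_sqrt ht0]
        rw [div_eq_iff (by positivity : (m*m*t:ℝ) ≠ 0)]
        ring
      have hval : (m:ℂ) * ((starRingEnd ℂ) a * (Real.sqrt t:ℂ)) = z - t := by
        rw [hadef, map_div₀, Complex.conj_conj, map_mul, Complex.conj_ofReal,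
          Complex.conj_ofReal]
        field_simp [mul_ne_zero_iff.mp hden]
      refine ⟨(WithLp.equiv 2 (Fin 2 → ℂ)).symm ![a, (Real.sqrt t : ℂ)], ?_, ?_⟩
      · rw [norm_eval', hna, Complex.normSq_ofReal, Real.mul_self_sqrt ht0]
        norm_num
      · rw [inner_eval]
        have e0 : ((WithLp.equiv 2 (Fin 2 → ℂ)).symm ![a, (Real.sqrt t : ℂ)]) 0 = a := rfl
        have e1 : ((WithLp.equiv 2 (Fin 2 → ℂ)).symm ![a, (Real.sqrt t : ℂ)]) 1
          = (Real.sqrt t : ℂ) := rfl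
        rw [e0, e1, Complex.conj_ofReal]
        have hbb : (Real.sqrt t : ℂ) * (Real.sqrt t : ℂ) = (t:ℂ) := by
          rw [← Complex.ofReal_mul, Real.mul_self_sqrt ht0]
        rw [hbb, hval]
        ring
end

section
/- Let n ≥ 1 and let J be the n×n nilpotent Jordan block, i.e., the matrix with J_{i,i+1} = 1 for 1 ≤ i ≤ n−1 and all other entries 0. Then the numerical range of J is the closed disk centered at 0 of radius cos(π/(n+1)): W(J) = { z ∈ ℂ : |z| ≤ cos(π/(n+1)) }. -/
open Finset Real

/- ### Auxiliary definitions -/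

noncomputable def yy (n : ℕ) (x : EuclideanSpace ℂ (Fin n)) : ℕ → ℂ :=
  fun k => if h : k < n then x ⟨k, h⟩ else 0

noncomputable def vv (n : ℕ) : ℕ → ℝ :=
  fun k => if k < n then Real.sin ((k+1) * (π/(n+1))) else 0

noncomputable def ee : ℕ → ℝ := fun k => if k = 0 then 1 else 0
noncomputable def ww (n : ℕ) (t : ℝ) : ℕ → ℝ := fun k => (1-t) * ee k + t * vv n k
noncomputable def PP (n : ℕ) (t : ℝ) : ℝ := ∑ k ∈ range n, ww n t k * ww n t (k+1)
noncomputable def QQ (n : ℕ) (t : ℝ) : ℝ := ∑ k ∈ range n, (ww n t k)^2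

/- ### Elementary lemmas -/

lemma amgm (x y p q : ℝ) (hp : 0 < p) (hq : 0 < q) :
    x * y ≤ x^2 * (p/q) / 2 + y^2 * (q/p) / 2 := by
  have e : x^2 * (p/q) / 2 + y^2 * (q/p) / 2 - x*y = (x*p - y*q)^2/(2*p*q) := by
    field_simp; ring
  nlinarith [sq_nonneg (x*p - y*q), div_nonneg (sq_nonneg (x*p-y*q)) (by positivity : (0:ℝ) ≤ 2*p*q)]

lemma trig (θ : ℝ) (k : ℕ) :
    Real.sin ((k+2) * θ) + Real.sin (k * θ) = 2 * Real.sin ((k+1) * θ) * Real.cos θ := by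
  have h1 : ((k:ℝ)+2)*θ = (k+1)*θ + θ := by ring
  have h2 : (k:ℝ)*θ = (k+1)*θ - θ := by ring
  rw [h1, h2, Real.sin_add, Real.sin_sub]; ring

/- ### The upper bound -/

lemma sum_bound (n : ℕ) (hn : 1 ≤ n) (b : ℕ → ℝ) (hbn : b n = 0) :
    ∑ k ∈ range n, b k * b (k+1) ≤ Real.cos (π/(n+1)) * ∑ k ∈ range n, (b k)^2 := by
  set θ := π/(n+1) with hθ
  set S : ℕ → ℝ := fun k => Real.sin (k * θ) with hS
  have hSpos : ∀ k : ℕ, 1 ≤ k → k ≤ n → 0 < S k := by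
    intro k h1 h2
    apply Real.sin_pos_of_pos_of_lt_pi
    · apply mul_pos (by exact_mod_cast Nat.lt_of_lt_of_le Nat.zero_lt_one h1)
      rw [hθ]; positivity
    · rw [hθ]
      rw [div_eq_mul_inv, ← mul_assoc]
      calc (k:ℝ) * π * ((n:ℝ)+1)⁻¹ < ((n:ℝ)+1) * π * ((n:ℝ)+1)⁻¹ := by
            apply mul_lt_mul_of_pos_right
            · apply mul_lt_mul_of_pos_right _ Real.pi_pos
              exact_mod_cast Nat.lt_succ_of_le h2
            · positivity
        _ = π := by field_simp
  have hS0 : S 0 = 0 := by simp [hS]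
  have hSn1 : S (n+1) = 0 := by
    show Real.sin ((((n+1:ℕ)):ℝ) * θ) = 0
    push_cast
    rw [hθ, show ((n:ℝ)+1) * (π/((n:ℝ)+1)) = π by field_simp, Real.sin_pi]
  have step : ∀ k ∈ range n, b k * b (k+1) ≤
      (b k)^2 * (S (k+2) / S (k+1)) / 2 + (b (k+1))^2 * (S (k+1) / S (k+2)) / 2 := by
    intro k hk
    rw [mem_range] at hk
    rcases lt_or_eq_of_le (Nat.succ_le_of_lt hk) with h | h
    · exact amgm _ _ _ _ (hSpos (k+2) (by omega) (by omega)) (hSpos (k+1) (by omega) (by omega))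
    · have hb1 : b (k+1) = 0 := by rw [show k+1 = n by omega]; exact hbn
      have hS2 : S (k+2) = 0 := by rw [show k+2 = n+1 by omega]; exact hSn1
      rw [hb1, hS2]
      simp
  refine le_trans (Finset.sum_le_sum step) ?_
  rw [Finset.sum_add_distrib]
  have shift : ∑ k ∈ range n, (b (k+1))^2 * (S (k+1) / S (k+2)) / 2
      = ∑ k ∈ range n, (b k)^2 * (S k / S (k+1)) / 2 := by
    have h1 := Finset.sum_range_succ' (fun j => (b j)^2 * (S j / S (j+1)) / 2) n
    have h2 : (b (n:ℕ))^2 * (S n / S (n+1)) / 2 = 0 := by rw [hbn]; ring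
    have h3 : (b 0)^2 * (S 0 / S 1) / 2 = 0 := by rw [hS0]; simp
    rw [Finset.sum_range_succ] at h1
    linarith [h1]
  rw [shift, ← Finset.sum_add_distrib, Finset.mul_sum]
  apply Finset.sum_le_sum
  intro k hk
  rw [mem_range] at hk
  have hpos : 0 < S (k+1) := hSpos (k+1) (by omega) (by omega)
  have key : S (k+2) + S k = 2 * S (k+1) * Real.cos θ := by
    simp only [hS]; push_cast; exact trig θ k
  have : (b k)^2 * (S (k+2) / S (k+1)) / 2 + (b k)^2 * (S k / S (k+1)) / 2
      = (b k)^2 * ((S (k+2) + S k) / (2 * S (k+1))) := by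
    field_simp
  rw [this, key]
  rw [show 2 * S (k+1) * Real.cos θ / (2 * S (k+1)) = Real.cos θ by field_simp]
  linarith [sq_nonneg (b k)]

/- ### The extremal eigenvector -/

lemma vv_succ (n : ℕ) (hn : 1 ≤ n) (k : ℕ) (hk : k < n) :
    vv n (k+1) = Real.sin ((k+2) * (π/(n+1))) := by
  rcases lt_or_eq_of_le (Nat.succ_le_of_lt hk) with h | h
  · rw [vv, if_pos h]; push_cast; ring_nf
  · rw [vv, if_neg (by omega)]
    have : ((k:ℝ)+2) * (π/(n+1)) = π := by
      have hkn : (n:ℝ) = (k:ℝ)+1 := by exact_mod_cast h.symm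
      rw [hkn]; field_simp; ring
    rw [this, Real.sin_pi]

lemma vv_pos (n k : ℕ) (hk : k < n) : 0 < vv n k := by
  rw [vv, if_pos hk]
  apply Real.sin_pos_of_pos_of_lt_pi
  · have : (0:ℝ) < π/(n+1) := by positivity
    positivity
  · have h1 : ((k:ℝ)+1) < (n:ℝ)+1 := by exact_mod_cast Nat.succ_lt_succ hk
    calc ((k:ℝ)+1) * (π/(n+1)) < ((n:ℝ)+1) * (π/(n+1)) := by
          apply mul_lt_mul_of_pos_right h1; positivity
      _ = π := by field_simp

lemma sum_eq (n : ℕ) (hn : 1 ≤ n) :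
    ∑ k ∈ range n, vv n k * vv n (k+1)
      = Real.cos (π/(n+1)) * ∑ k ∈ range n, (vv n k)^2 := by
  set θ := π/(n+1) with hθ
  set S : ℕ → ℝ := fun k => Real.sin (k * θ) with hS
  have hSv : ∀ k < n, vv n k = S (k+1) := by
    intro k hk; rw [vv, if_pos hk, hS]; push_cast; rw [hθ]
  have hSv' : ∀ k < n, vv n (k+1) = S (k+2) := by
    intro k hk; rw [vv_succ n hn k hk, hS]; push_cast; rw [hθ]
  have hS0 : S 0 = 0 := by simp [hS]
  have hSn1 : S (n+1) = 0 := by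
    show Real.sin ((((n+1:ℕ)):ℝ) * θ) = 0
    push_cast
    rw [hθ, show ((n:ℝ)+1) * (π/((n:ℝ)+1)) = π by field_simp, Real.sin_pi]
  have hAC : ∑ k ∈ range n, vv n k * vv n (k+1) = ∑ k ∈ range n, S k * S (k+1) := by
    have e : ∀ k ∈ range n, vv n k * vv n (k+1) = (fun j => S j * S (j+1)) (k+1) := by
      intro k hk; rw [mem_range] at hk; rw [hSv k hk, hSv' k hk]
    rw [Finset.sum_congr rfl e]
    have h1 := Finset.sum_range_succ' (fun j => S j * S (j+1)) n
    rw [Finset.sum_range_succ] at h1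
    have h2 : S 0 * S 1 = 0 := by rw [hS0]; ring
    have h3 : S n * S (n+1) = 0 := by rw [hSn1]; ring
    linarith
  have hsum : ∑ k ∈ range n, (vv n k * vv n (k+1) + S k * S (k+1))
      = ∑ k ∈ range n, 2 * Real.cos θ * (vv n k)^2 := by
    apply Finset.sum_congr rfl
    intro k hk
    rw [mem_range] at hk
    rw [hSv k hk, hSv' k hk]
    have t : S (k+2) + S k = 2 * S (k+1) * Real.cos θ := by
      simp only [hS]; push_cast; exact trig θ k
    calc S (k+1) * S (k+2) + S k * S (k+1) = S (k+1) * (S (k+2) + S k) := by ring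
      _ = S (k+1) * (2 * S (k+1) * Real.cos θ) := by rw [t]
      _ = 2 * Real.cos θ * (S (k+1))^2 := by ring
  rw [Finset.sum_add_distrib, ← hAC] at hsum
  rw [Finset.mul_sum]
  have : ∑ k ∈ range n, 2 * Real.cos θ * (vv n k)^2
      = 2 * ∑ k ∈ range n, Real.cos θ * (vv n k)^2 := by
    rw [Finset.mul_sum]; apply Finset.sum_congr rfl; intro k _; ring
  rw [this] at hsum
  linarith

/- ### Realizing every value in `[0, cos θ]` -/

lemma exists_a (n : ℕ) (hn : 1 ≤ n) (r : ℝ) (hr0 : 0 ≤ r) (hr1 : r ≤ Real.cos (π/(n+1))) :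
    ∃ a : ℕ → ℝ, a n = 0 ∧ (∑ k ∈ range n, (a k)^2 = 1) ∧
      (∑ k ∈ range n, a k * a (k+1) = r) := by
  have hcontP : Continuous (PP n) := by
    apply continuous_finset_sum
    intro k _
    apply Continuous.mul <;> (unfold ww; fun_prop)
  have hcontQ : Continuous (QQ n) := by
    apply continuous_finset_sum
    intro k _
    unfold ww; fun_prop
  have hv0 : 0 < vv n 0 := vv_pos n 0 (by omega)
  have hQpos : ∀ t ∈ Set.Icc (0:ℝ) 1, 0 < QQ n t := by
    intro t ht
    have he : ee 0 = 1 := by unfold ee; norm_num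
    have hw0 : 0 < ww n t 0 := by
      unfold ww
      rw [he]
      rcases eq_or_lt_of_le ht.1 with h | h
      · rw [← h]; norm_num
      · have := mul_pos h hv0
        nlinarith [ht.2]
    calc (0:ℝ) < (ww n t 0)^2 := by positivity
      _ ≤ QQ n t := by
        unfold QQ
        exact Finset.single_le_sum (f := fun k => (ww n t k)^2)
          (fun k _ => sq_nonneg _) (by rw [mem_range]; omega)
  have hF0 : PP n 0 / QQ n 0 = 0 := by
    have hP : PP n 0 = 0 := by
      unfold PP
      apply Finset.sum_eq_zero
      intro k _
      have : ww n 0 (k+1) = 0 * vv n (k+1) := by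
        unfold ww ee; simp
      unfold ww at this ⊢
      rw [this]; ring
    rw [hP, zero_div]
  have hF1 : PP n 1 / QQ n 1 = Real.cos (π/(n+1)) := by
    have hw1 : ∀ k, ww n 1 k = vv n k := by intro k; unfold ww; ring
    have hP : PP n 1 = Real.cos (π/(n+1)) * QQ n 1 := by
      unfold PP QQ
      simp only [hw1]
      exact sum_eq n hn
    rw [hP, mul_div_assoc, div_self (ne_of_gt (hQpos 1 (by norm_num))), mul_one]
  have hcont : ContinuousOn (fun t => PP n t / QQ n t) (Set.Icc 0 1) :=
    ContinuousOn.div hcontP.continuousOn hcontQ.continuousOn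
      (fun t ht => ne_of_gt (hQpos t ht))
  have := intermediate_value_Icc (by norm_num : (0:ℝ) ≤ 1) hcont
  rw [hF0, hF1] at this
  obtain ⟨t, ht, hFt⟩ := this ⟨hr0, hr1⟩
  refine ⟨fun k => ww n t k / Real.sqrt (QQ n t), ?_, ?_, ?_⟩ <;> beta_reduce
  · have : ww n t n = 0 := by
      unfold ww ee vv
      rw [if_neg (by omega), if_neg (by omega)]
      ring
    rw [this, zero_div]
  · have hQ := hQpos t ht
    have hsq : Real.sqrt (QQ n t) ^ 2 = QQ n t := Real.sq_sqrt hQ.le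
    have : ∑ k ∈ range n, (ww n t k / Real.sqrt (QQ n t))^2
        = (∑ k ∈ range n, (ww n t k)^2) / QQ n t := by
      rw [Finset.sum_div]
      apply Finset.sum_congr rfl
      intro k _
      rw [div_pow, hsq]
    rw [this]
    exact div_self (ne_of_gt hQ)
  · have hQ := hQpos t ht
    have hsq : Real.sqrt (QQ n t) * Real.sqrt (QQ n t) = QQ n t :=
      Real.mul_self_sqrt hQ.le
    have : ∑ k ∈ range n, (ww n t k / Real.sqrt (QQ n t)) * (ww n t (k+1) / Real.sqrt (QQ n t))
        = (∑ k ∈ range n, ww n t k * ww n t (k+1)) / QQ n t := by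
      rw [Finset.sum_div]
      apply Finset.sum_congr rfl
      intro k _
      rw [div_mul_div_comm, hsq]
    rw [this]
    exact hFt

/- ### The inner-product formula -/

lemma inner_formula_s9 (n : ℕ) (x : EuclideanSpace ℂ (Fin n)) :
    (inner ℂ x (Matrix.toEuclideanLin
        (Matrix.of fun i j : Fin n => if (j : ℕ) = (i : ℕ) + 1 then (1 : ℂ) else 0) x) : ℂ)
      = ∑ k ∈ range n, (starRingEnd ℂ) (yy n x k) * (yy n x (k+1)) := by
  set y : ℕ → ℂ := yy n x with hy0
  have hy : y = fun k => if h : k < n then x ⟨k,h⟩ else 0 := rfl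
  have hyx : ∀ i : Fin n, y (i:ℕ) = x i := by
    intro i; rw [hy]; simp only [i.isLt, dif_pos]
  rw [Matrix.toEuclideanLin_apply, PiLp.inner_apply]
  have key : ∀ i : Fin n, (Matrix.mulVec (Matrix.of fun i j : Fin n => if (j : ℕ) = (i : ℕ) + 1 then (1 : ℂ) else 0) ((WithLp.ofLp x))) i = y ((i:ℕ)+1) := by
    intro i
    simp only [Matrix.mulVec, dotProduct, Matrix.of_apply]
    have : ∀ j : Fin n, (if (j:ℕ) = (i:ℕ)+1 then (1:ℂ) else 0) * (WithLp.ofLp x) j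
        = (fun k => (if k = (i:ℕ)+1 then (1:ℂ) else 0) * y k) (j:ℕ) := by
      intro j; simp only [hyx]
    rw [Finset.sum_congr rfl (fun j _ => this j),
      Fin.sum_univ_eq_sum_range (fun k => (if k = (i:ℕ)+1 then (1:ℂ) else 0) * y k)]
    simp only [ite_mul, one_mul, zero_mul]
    rw [Finset.sum_ite_eq' (range n) ((i:ℕ)+1) y]
    split_ifs with h
    · rfl
    · rw [hy]
      show _ = if h : (i:ℕ)+1 < n then x ⟨(i:ℕ)+1,h⟩ else 0
      rw [Finset.mem_range] at h; rw [dif_neg h]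
  have : ∀ i : Fin n, (starRingEnd ℂ) (x i) * (WithLp.toLp 2
      (Matrix.mulVec (Matrix.of fun i j : Fin n => if (j : ℕ) = (i : ℕ) + 1 then (1 : ℂ) else 0) ((WithLp.ofLp x))) i)
      = (fun k => (starRingEnd ℂ) (y k) * y (k+1)) (i:ℕ) := by
    intro i
    simp only [key i, hyx]
  simp only [RCLike.inner_apply']
  calc ∑ i : Fin n, _ = ∑ i : Fin n, (fun k => (starRingEnd ℂ) (y k) * y (k+1)) (i:ℕ) :=
        Finset.sum_congr rfl (fun i _ => this i)
    _ = _ := by rw [Fin.sum_univ_eq_sum_range (fun k => (starRingEnd ℂ) (y k) * y (k+1)) n]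

/- ### Norm formula -/

lemma norm_formula (n : ℕ) (x : EuclideanSpace ℂ (Fin n)) (hx : ‖x‖ = 1) :
    ∑ k ∈ range n, (‖yy n x k‖)^2 = 1 := by
  have h := EuclideanSpace.norm_eq x
  rw [hx] at h
  have h2 : ∑ i : Fin n, ‖x i‖^2 = 1 := by
    rw [← Real.sqrt_eq_one]; exact h.symm
  have e : ∀ i : Fin n, ‖x i‖^2 = (fun k => (‖yy n x k‖)^2) (i:ℕ) := by
    intro i
    have : yy n x (i:ℕ) = x i := by rw [yy]; simp only [i.isLt, dif_pos]
    simp only [this]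
  rw [Finset.sum_congr rfl (fun i _ => e i)] at h2
  rw [← Fin.sum_univ_eq_sum_range (fun k => (‖yy n x k‖)^2) n]
  exact h2

/- ### Main theorem -/

/-- The numerical range of the `n × n` nilpotent Jordan block is the closed disk centered
at `0` of radius `cos (π / (n + 1))`. -/
theorem numRange_jordan_block (n : ℕ) (hn : 1 ≤ n) :
    numRange (Matrix.of fun i j : Fin n => if (j : ℕ) = (i : ℕ) + 1 then (1 : ℂ) else 0) =
      {z : ℂ | ‖z‖ ≤ Real.cos (Real.pi / (n + 1))} := by
  ext z
  simp only [numRange, Set.mem_setOf_eq]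
  constructor
  · rintro ⟨x, hx, rfl⟩
    rw [inner_formula_s9 n x]
    set y := yy n x with hy0
    have hyn : y n = 0 := by rw [hy0, yy]; simp
    calc ‖∑ k ∈ range n, (starRingEnd ℂ) (y k) * y (k+1)‖
        ≤ ∑ k ∈ range n, ‖(starRingEnd ℂ) (y k) * y (k+1)‖ :=
          norm_sum_le _ _
      _ = ∑ k ∈ range n, ‖y k‖ * ‖y (k+1)‖ := by
          apply Finset.sum_congr rfl
          intro k _
          rw [norm_mul, Complex.norm_conj]
      _ ≤ Real.cos (π/(n+1)) * ∑ k ∈ range n, (‖y k‖)^2 := by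
          apply sum_bound n hn
          rw [hyn]; simp
      _ = Real.cos (π/(n+1)) := by rw [norm_formula n x hx, mul_one]
  · intro hz
    obtain ⟨a, han, ha1, har⟩ := exists_a n hn (‖z‖) (norm_nonneg z) hz
    set u : ℂ := if z = 0 then 1 else z / ‖z‖ with hu0
    have hu1 : ‖u‖ = 1 := by
      rw [hu0]
      split_ifs with h
      · simp
      · rw [norm_div, Complex.norm_real, Real.norm_eq_abs, abs_of_nonneg (norm_nonneg z),
          div_self (norm_ne_zero_iff.mpr h)]
    have huz : u * (‖z‖ : ℂ) = z := by
      rw [hu0]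
      split_ifs with h
      · rw [h]; simp
      · rw [div_mul_cancel₀]
        exact_mod_cast norm_ne_zero_iff.mpr h
    have huu : (starRingEnd ℂ) u * u = 1 := by
      rw [← Complex.normSq_eq_conj_mul_self]
      rw [Complex.normSq_eq_norm_sq, hu1]
      norm_num
    set x : EuclideanSpace ℂ (Fin n) := WithLp.toLp 2 fun i : Fin n => u^(i:ℕ) * (a (i:ℕ) : ℂ) with hx0
    have hxy : ∀ k, yy n x k = if k < n then u^k * (a k : ℂ) else 0 := by
      intro k
      rw [yy]
      split_ifs with h
      · rfl
      · rfl
    refine ⟨x, ?_, ?_⟩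
    · rw [EuclideanSpace.norm_eq]
      have e : ∀ i : Fin n, ‖x i‖^2 = (fun k => (a k)^2) (i:ℕ) := by
        intro i
        rw [hx0]
        beta_reduce
        rw [norm_mul, norm_pow]
        rw [hu1, one_pow, one_mul,
          Complex.norm_real, Real.norm_eq_abs, sq_abs]
      rw [Finset.sum_congr rfl (fun i _ => e i),
        Fin.sum_univ_eq_sum_range (fun k => (a k)^2) n, ha1, Real.sqrt_one]
    · rw [inner_formula_s9 n x]
      have term : ∀ k ∈ range n, (starRingEnd ℂ) (yy n x k) * (yy n x (k+1))
          = u * ((a k * a (k+1) : ℝ) : ℂ) := by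
        intro k hk
        rw [mem_range] at hk
        rw [hxy k, hxy (k+1), if_pos hk]
        by_cases h : k + 1 < n
        · rw [if_pos h, map_mul, map_pow, Complex.conj_ofReal, Complex.ofReal_mul]
          have : ((starRingEnd ℂ) u)^k * (a k : ℂ) * (u^(k+1) * (a (k+1) : ℂ))
              = ((starRingEnd ℂ) u * u)^k * u * ((a k : ℂ) * ((a (k+1) : ℝ) : ℂ)) := by ring
          rw [this, huu, one_pow, one_mul]
        · have hk1 : k + 1 = n := by omega
          have : a (k+1) = 0 := by rw [hk1]; exact han
          rw [if_neg h, this]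
          push_cast
          ring
      rw [Finset.sum_congr rfl term, ← Finset.mul_sum, ← Complex.ofReal_sum, har, huz]
end

section
/- Let A be an n×n complex matrix with operator norm ‖A‖ ≤ 1. Define D_A = (I − AA*)^{1/2} and D_{A*} = (I − A*A)^{1/2}, the positive semidefinite square roots of the positive semidefinite matrices I − AA* and I − A*A. Then the 2n×2n block matrix U = [[A, D_A], [D_{A*}, −A*]] is unitary (and A is the top-left block of U, so U is a unitary dilation of A). -/
open scoped Matrix ComplexOrder

set_option maxHeartbeats 1000000

open scoped MatrixOrder

open Matrix in
/-- If `Y` commutes with a real diagonal matrix, it commutes with any function of it. -/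
lemma diag_intertwine {n : Type*} [Fintype n] [DecidableEq n] (Y : Matrix n n ℂ)
    (d : n → ℝ) (f : ℝ → ℝ)
    (h : Y * diagonal ((↑) ∘ d) = diagonal ((↑) ∘ d) * Y) :
    Y * diagonal ((↑) ∘ f ∘ d) = diagonal ((↑) ∘ f ∘ d) * Y := by
  ext i j
  have h' : Y i j * (d j : ℂ) = (d i : ℂ) * Y i j := by
    have := congrFun (congrFun h i) j
    simpa [mul_diagonal, diagonal_mul] using this
  rcases eq_or_ne (d i) (d j) with hd | hd
  · simp [mul_diagonal, diagonal_mul, hd, mul_comm]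
  · have hne : (d j : ℂ) - (d i : ℂ) ≠ 0 := by
      rw [sub_ne_zero]
      exact_mod_cast hd.symm
    have h0 : Y i j * ((d j : ℂ) - (d i : ℂ)) = 0 := by linear_combination h'
    have hY : Y i j = 0 := (mul_eq_zero.mp h0).resolve_right hne
    simp [mul_diagonal, diagonal_mul, hY]

open Matrix in
/-- Anything commuting with a psd matrix commutes with its psd square root. -/
lemma commute_sqrt {n : Type*} [Fintype n] [DecidableEq n] {M : Matrix n n ℂ}
    (hM : M.PosSemidef) (X : Matrix n n ℂ) (h : X * M = M * X) :
    X * CFC.sqrt M = CFC.sqrt M * X := by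
  set U : Matrix n n ℂ := hM.1.eigenvectorUnitary.1 with hU
  have hUU : star U * U = 1 := Matrix.UnitaryGroup.star_mul_self hM.1.eigenvectorUnitary
  have hUU' : U * star U = 1 := Matrix.mem_unitaryGroup_iff.mp hM.1.eigenvectorUnitary.2
  set D : Matrix n n ℂ := diagonal ((↑) ∘ hM.1.eigenvalues) with hD
  set D' : Matrix n n ℂ := diagonal ((↑) ∘ Real.sqrt ∘ hM.1.eigenvalues) with hD'
  have hspec : M = U * D * star U := hM.1.spectral_theorem
  have hMD : star U * M * U = D := by
    rw [hspec]
    calc star U * (U * D * star U) * U = (star U * U) * D * (star U * U) := by noncomm_ring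
    _ = D := by rw [hUU]; noncomm_ring
  have hYD : (star U * X * U) * D = D * (star U * X * U) := by
    calc (star U * X * U) * D = (star U * X * U) * (star U * M * U) := by rw [hMD]
    _ = star U * (X * ((U * star U) * M)) * U := by noncomm_ring
    _ = star U * (X * M) * U := by rw [hUU']; noncomm_ring
    _ = star U * (M * X) * U := by rw [h]
    _ = star U * ((M * (U * star U)) * X) * U := by rw [hUU']; noncomm_ring
    _ = (star U * M * U) * (star U * X * U) := by noncomm_ring
    _ = D * (star U * X * U) := by rw [hMD]
  have key : (star U * X * U) * D' = D' * (star U * X * U) := by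
    rw [hD] at hYD
    rw [hD']
    exact diag_intertwine _ hM.1.eigenvalues Real.sqrt hYD
  have hsq : CFC.sqrt M = U * D' * star U := by
    rw [CFC.sqrt_eq_cfc, cfc_nnreal_eq_real _ M hM.nonneg, hM.1.cfc_eq, hD']
    simp only [IsHermitian.cfc, Unitary.conjStarAlgAut_apply, Real.coe_sqrt, Real.coe_toNNReal']
    have hfe : (fun x => √(max x 0)) ∘ hM.1.eigenvalues = Real.sqrt ∘ hM.1.eigenvalues := by
      funext i
      simp [max_eq_left (hM.eigenvalues_nonneg i)]
    rw [hfe]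
    rfl
  rw [hsq]
  calc X * (U * D' * star U) = (U * star U) * X * (U * D' * star U) := by
        rw [hUU']; noncomm_ring
  _ = U * ((star U * X * U) * D') * star U := by noncomm_ring
  _ = U * (D' * (star U * X * U)) * star U := by rw [key]
  _ = (U * D' * star U) * (X * (U * star U)) := by noncomm_ring
  _ = (U * D' * star U) * X := by rw [hUU']; noncomm_ring

open Matrix in
/-- A block-diagonal matrix with psd blocks is psd. -/
lemma posSemidef_fromBlocks_diag {m : Type*} [Fintype m] {P Q : Matrix m m ℂ}
    (hP : P.PosSemidef) (hQ : Q.PosSemidef) :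
    (fromBlocks P 0 0 Q).PosSemidef := by
  rw [posSemidef_iff_dotProduct_mulVec]
  constructor
  · have : (fromBlocks P 0 0 Q)ᴴ = fromBlocks Pᴴ 0ᴴ 0ᴴ Qᴴ := by
      rw [fromBlocks_conjTranspose]
    rw [IsHermitian, this, hP.1, hQ.1]
    simp
  · intro x
    have hx : x = Sum.elim (x ∘ Sum.inl) (x ∘ Sum.inr) := (Sum.elim_comp_inl_inr x).symm
    rw [hx]
    have h1 := (posSemidef_iff_dotProduct_mulVec.mp hP).2 (x ∘ Sum.inl)
    have h2 := (posSemidef_iff_dotProduct_mulVec.mp hQ).2 (x ∘ Sum.inr)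
    simp only [fromBlocks_mulVec, Function.star_sumElim, sumElim_dotProduct_sumElim,
      Sum.elim_comp_inl, Sum.elim_comp_inr,
      Matrix.zero_mulVec, add_zero, zero_add]
    exact add_nonneg h1 h2

/-- Halmos's unitary dilation: if `‖A‖ ≤ 1` (operator norm on Euclidean space) and
`D_A`, `D_{A*}` are the positive semidefinite square roots of `I - AA*` and `I - A*A`,
then the block matrix `U = [[A, D_A], [D_{A*}, -A*]]` is unitary. -/
theorem halmos_dilation_unitary (n : ℕ) (A : Matrix (Fin n) (Fin n) ℂ)
    (hA : ‖Matrix.toEuclideanCLM (𝕜 := ℂ) A‖ ≤ 1)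
    (DA DAs : Matrix (Fin n) (Fin n) ℂ)
    (hDA : DA.PosSemidef) (hDA2 : DA * DA = 1 - A * Aᴴ)
    (hDAs : DAs.PosSemidef) (hDAs2 : DAs * DAs = 1 - Aᴴ * A) :
    Matrix.fromBlocks A DA DAs (-Aᴴ) ∈ Matrix.unitaryGroup (Fin n ⊕ Fin n) ℂ := by
  classical
  -- the block diagonal matrices N and M = N²
  set N : Matrix (Fin n ⊕ Fin n) (Fin n ⊕ Fin n) ℂ := Matrix.fromBlocks DAs 0 0 DA with hN
  set M : Matrix (Fin n ⊕ Fin n) (Fin n ⊕ Fin n) ℂ :=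
    Matrix.fromBlocks (1 - Aᴴ * A) 0 0 (1 - A * Aᴴ) with hM
  have hNpsd : N.PosSemidef := posSemidef_fromBlocks_diag hDAs hDA
  have hNN : N ^ 2 = M := by
    rw [hN, hM, pow_two, Matrix.fromBlocks_multiply]
    simp [hDA2, hDAs2]
  have hMpsd : M.PosSemidef := hNN ▸ (hNpsd.pow 2)
  -- the off-diagonal block matrix X commutes with M
  set X : Matrix (Fin n ⊕ Fin n) (Fin n ⊕ Fin n) ℂ := Matrix.fromBlocks 0 Aᴴ A 0 with hX
  have hXM : X * M = M * X := by
    rw [hX, hM, Matrix.fromBlocks_multiply, Matrix.fromBlocks_multiply]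
    congr 1 <;> noncomm_ring
  -- hence X commutes with N = sqrt M
  have hNsqrt : N = CFC.sqrt M := by
    rw [eq_comm, CFC.sqrt_eq_iff M N hMpsd.nonneg hNpsd.nonneg, ← hNN, sq]
  have hXN : X * N = N * X := by
    rw [hNsqrt]
    exact commute_sqrt hMpsd X hXM
  -- extract the intertwining relations
  have h12 : Aᴴ * DA = DAs * Aᴴ := by
    have := congrArg Matrix.toBlocks₁₂ hXN
    simpa [hX, hN, Matrix.fromBlocks_multiply, Matrix.toBlocks_fromBlocks₁₂] using this
  have h21 : A * DAs = DA * A := by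
    have := congrArg Matrix.toBlocks₂₁ hXN
    simpa [hX, hN, Matrix.fromBlocks_multiply, Matrix.toBlocks_fromBlocks₂₁] using this
  -- now verify unitarity
  rw [Matrix.mem_unitaryGroup_iff]
  have hstar : star (Matrix.fromBlocks A DA DAs (-Aᴴ))
      = Matrix.fromBlocks Aᴴ DAs DA (-A) := by
    show (Matrix.fromBlocks A DA DAs (-Aᴴ))ᴴ = _
    rw [Matrix.fromBlocks_conjTranspose, hDA.1, hDAs.1]
    simp
  rw [hstar, Matrix.fromBlocks_multiply]
  have b11 : A * Aᴴ + DA * DA = 1 := by rw [hDA2]; noncomm_ring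
  have b12 : A * DAs + DA * -A = 0 := by rw [h21]; noncomm_ring
  have b21 : DAs * Aᴴ + -Aᴴ * DA = 0 := by rw [← h12]; noncomm_ring
  have b22 : DAs * DAs + -Aᴴ * -A = 1 := by rw [hDAs2]; noncomm_ring
  rw [b11, b12, b21, b22, Matrix.fromBlocks_one]
end

section
/- Let a₁, …, aₙ ∈ ℂ with |a_j| < 1 for all j, and let λ ∈ ℂ with |λ| = 1. Define the (n+1)×(n+1) matrix U^λ by: U^λ_{ii} = a_i for 1 ≤ i ≤ n; U^λ_{ij} = (∏_{k=i+1}^{j−1} (−ā_k))·√(1−|a_i|²)·√(1−|a_j|²) for 1 ≤ i < j ≤ n (empty products equal 1); U^λ_{ij} = 0 for 1 ≤ j < i ≤ n; U^λ_{n+1,j} = λ·(∏_{k=1}^{j−1} (−ā_k))·√(1−|a_j|²) for 1 ≤ j ≤ n; U^λ_{i,n+1} = (∏_{k=i+1}^{n} (−ā_k))·√(1−|a_i|²) for 1 ≤ i ≤ n; and U^λ_{n+1,n+1} = λ·∏_{k=1}^{n} (−ā_k). Then U^λ is a unitary matrix. -/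
open Finset in
private theorem UlamAux.telescope (g : ℕ → ℂ) (s : ℕ) : ∀ t, s ≤ t →
    ∑ j ∈ Ico s t, (∏ k ∈ Ico s j, g k) * (1 - g j)
      = 1 - ∏ k ∈ Ico s t, g k := by
  intro t ht
  induction t, ht using Nat.le_induction with
  | base => simp
  | succ t ht ih =>
      rw [Finset.sum_Ico_succ_top (by omega), Finset.prod_Ico_succ_top (by omega), ih]
      ring

open Finset in
noncomputable def UlamAux.u (n : ℕ) (b c α : ℕ → ℂ) (lam : ℂ) (i j : ℕ) : ℂ :=
  if i < n then
    if j < n then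
      if i = j then α i
      else if i < j then (∏ k ∈ Ico (i+1) j, b k) * c i * c j
      else 0
    else (∏ k ∈ Ico (i+1) n, b k) * c i
  else
    if j < n then lam * (∏ k ∈ Ico 0 j, b k) * c j
    else lam * ∏ k ∈ Ico 0 n, b k

open Finset in
private theorem UlamAux.filter_prod {n : ℕ} (B : Fin n → ℂ) (p : ℕ → Prop) [DecidablePred p] :
    ∏ k ∈ Finset.univ.filter (fun k : Fin n => p (k : ℕ)), B k
      = ∏ m ∈ (Finset.range n).filter p, (if h : m < n then B ⟨m, h⟩ else 1) := by
  rw [Finset.prod_filter, Finset.prod_filter, ← Fin.prod_univ_eq_prod_range]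
  exact Finset.prod_congr rfl fun k _ => by simp [k.isLt]

noncomputable def UlamAux.B {n : ℕ} (a : Fin n → ℂ) : ℕ → ℂ :=
  fun k => if h : k < n then -(starRingEnd ℂ) (a ⟨k, h⟩) else 1

noncomputable def UlamAux.C {n : ℕ} (a : Fin n → ℂ) : ℕ → ℂ :=
  fun k => (((if h : k < n then Real.sqrt (1 - ‖a ⟨k, h⟩‖ ^ 2) else 0) : ℝ) : ℂ)

noncomputable def UlamAux.A {n : ℕ} (a : Fin n → ℂ) : ℕ → ℂ :=
  fun k => if h : k < n then a ⟨k, h⟩ else 0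

open Finset in
private theorem UlamAux.key (n : ℕ) (b c α : ℕ → ℂ) (lam : ℂ)
    (hcr : ∀ k, (starRingEnd ℂ) (c k) = c k)
    (hcc : ∀ k, k < n → c k * c k = 1 - b k * (starRingEnd ℂ) (b k))
    (hab : ∀ k, k < n → (starRingEnd ℂ) (α k) = -b k)
    (hl : lam * (starRingEnd ℂ) lam = 1)
    (i i' : ℕ) (hii : i ≤ i') (hi' : i' ≤ n) :
    ∑ j ∈ range (n+1), u n b c α lam i j * (starRingEnd ℂ) (u n b c α lam i' j)
      = if i = i' then 1 else 0 := by
  have hba : ∀ k, k < n → (starRingEnd ℂ) (b k) = -α k := by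
    intro k hk
    have hb : b k = -((starRingEnd ℂ) (α k)) := by rw [hab k hk]; ring
    rw [hb, map_neg, Complex.conj_conj]
  have haa : ∀ k, k < n → α k * (starRingEnd ℂ) (α k) = b k * (starRingEnd ℂ) (b k) := by
    intro k hk; rw [hab k hk, hba k hk]; ring
  have hsum : ∀ (t : ℕ → ℂ) (p : ℕ), p < n →
      ∑ j ∈ range (n+1), t j
        = (∑ j ∈ Ico 0 p, t j) + t p + ((∑ j ∈ Ico (p+1) n, t j) + t n) := by
    intro t p hp
    rw [Finset.sum_range_succ, range_eq_Ico,
      ← Finset.sum_Ico_consecutive t (by omega : 0 ≤ p) (by omega : p ≤ n),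
      Finset.sum_eq_sum_Ico_succ_bot (by omega : p < n)]
    ring
  have htel : ∀ s, s ≤ n →
      ∑ j ∈ Ico s n, (∏ k ∈ Ico s j, (b k * (starRingEnd ℂ) (b k))) *
          (1 - b j * (starRingEnd ℂ) (b j))
        = 1 - ∏ k ∈ Ico s n, (b k * (starRingEnd ℂ) (b k)) :=
    fun s hs => telescope _ s n hs
  -- entry access lemmas
  have hu_lt : ∀ p q, p < n → q < p → u n b c α lam p q = 0 := by
    intro p q hp hq
    simp only [u]
    rw [if_pos hp, if_pos (hq.trans hp), if_neg (by omega), if_neg (by omega)]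
  have hu_diag : ∀ p, p < n → u n b c α lam p p = α p := by
    intro p hp
    simp only [u]
    rw [if_pos hp, if_pos hp]
    simp
  have hu_gt : ∀ p q, p < n → q < n → p < q →
      u n b c α lam p q = (∏ k ∈ Ico (p+1) q, b k) * c p * c q := by
    intro p q hp hq hpq
    simp only [u]
    rw [if_pos hp, if_pos hq, if_neg (by omega), if_pos hpq]
  have hu_n : ∀ p, p < n → u n b c α lam p n = (∏ k ∈ Ico (p+1) n, b k) * c p := by
    intro p hp
    simp only [u]
    rw [if_pos hp, if_neg (by omega)]
  have hu_top : ∀ q, q < n → u n b c α lam n q = lam * (∏ k ∈ Ico 0 q, b k) * c q := by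
    intro q hq
    simp only [u]
    rw [if_neg (by omega), if_pos hq]
  have hu_nn : u n b c α lam n n = lam * ∏ k ∈ Ico 0 n, b k := by
    simp only [u]
    rw [if_neg (by omega), if_neg (by omega)]
  rcases eq_or_lt_of_le hii with rfl | hlt
  · rw [if_pos rfl]
    rcases lt_or_eq_of_le hi' with hin | heq
    · -- i = i' < n
      rw [hsum _ i hin]
      have h1 : ∑ j ∈ Ico 0 i, u n b c α lam i j * (starRingEnd ℂ) (u n b c α lam i j) = 0 :=
        Finset.sum_eq_zero fun j hj => by
          rw [hu_lt i j hin (Finset.mem_Ico.mp hj).2, zero_mul]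
      have h2 : u n b c α lam i i * (starRingEnd ℂ) (u n b c α lam i i)
          = b i * (starRingEnd ℂ) (b i) := by
        rw [hu_diag i hin, haa i hin]
      have h3 : ∑ j ∈ Ico (i+1) n, u n b c α lam i j * (starRingEnd ℂ) (u n b c α lam i j)
          = (c i * c i) * (1 - ∏ k ∈ Ico (i+1) n, (b k * (starRingEnd ℂ) (b k))) := by
        rw [← htel (i+1) (by omega), Finset.mul_sum]
        refine Finset.sum_congr rfl fun j hj => ?_
        obtain ⟨hj1, hj2⟩ := Finset.mem_Ico.mp hj
        rw [hu_gt i j hin hj2 (by omega), map_mul, map_mul, map_prod, hcr, hcr,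
          Finset.prod_mul_distrib, ← hcc j hj2]
        ring
      have h4 : u n b c α lam i n * (starRingEnd ℂ) (u n b c α lam i n)
          = (c i * c i) * ∏ k ∈ Ico (i+1) n, (b k * (starRingEnd ℂ) (b k)) := by
        rw [hu_n i hin, map_mul, map_prod, hcr, Finset.prod_mul_distrib]
        ring
      rw [h1, h2, h3, h4]
      linear_combination hcc i hin
    · -- i = i' = n
      rw [heq, Finset.sum_range_succ]
      have h1 : ∑ j ∈ range n, u n b c α lam n j * (starRingEnd ℂ) (u n b c α lam n j)
          = (lam * (starRingEnd ℂ) lam) *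
            (1 - ∏ k ∈ Ico 0 n, (b k * (starRingEnd ℂ) (b k))) := by
        rw [range_eq_Ico, ← htel 0 (by omega), Finset.mul_sum]
        refine Finset.sum_congr rfl fun j hj => ?_
        obtain ⟨hj1, hj2⟩ := Finset.mem_Ico.mp hj
        rw [hu_top j hj2, map_mul, map_mul, map_prod, hcr,
          Finset.prod_mul_distrib, ← hcc j hj2]
        ring
      have h2 : u n b c α lam n n * (starRingEnd ℂ) (u n b c α lam n n)
          = (lam * (starRingEnd ℂ) lam) * ∏ k ∈ Ico 0 n, (b k * (starRingEnd ℂ) (b k)) := by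
        rw [hu_nn, map_mul, map_prod, Finset.prod_mul_distrib]
        ring
      rw [h1, h2]
      linear_combination hl
  · -- i < i'
    rw [if_neg (by omega)]
    have hin : i < n := by omega
    rcases lt_or_eq_of_le hi' with hi'n | heq
    · -- i < i' < n
      rw [hsum _ i' hi'n]
      have h1 : ∑ j ∈ Ico 0 i', u n b c α lam i j * (starRingEnd ℂ) (u n b c α lam i' j) = 0 :=
        Finset.sum_eq_zero fun j hj => by
          rw [hu_lt i' j hi'n (Finset.mem_Ico.mp hj).2, map_zero, mul_zero]
      have hsplit : ∀ j, i' + 1 ≤ j →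
          (∏ k ∈ Ico (i+1) j, b k)
            = ((∏ k ∈ Ico (i+1) i', b k) * b i') * ∏ k ∈ Ico (i'+1) j, b k := by
        intro j hjj
        rw [← Finset.prod_Ico_consecutive b (show i+1 ≤ i'+1 by omega) hjj,
          Finset.prod_Ico_succ_top (show i+1 ≤ i' by omega)]
      have h2 : u n b c α lam i i' * (starRingEnd ℂ) (u n b c α lam i' i')
          = (∏ k ∈ Ico (i+1) i', b k) * (c i * c i') * (-(b i')) := by
        rw [hu_gt i i' hin hi'n hlt, hu_diag i' hi'n, hab i' hi'n]
        ring
      have h3 : ∑ j ∈ Ico (i'+1) n, u n b c α lam i j * (starRingEnd ℂ) (u n b c α lam i' j)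
          = (∏ k ∈ Ico (i+1) i', b k) * b i' * (c i * c i') *
            (1 - ∏ k ∈ Ico (i'+1) n, (b k * (starRingEnd ℂ) (b k))) := by
        rw [← htel (i'+1) (by omega), Finset.mul_sum]
        refine Finset.sum_congr rfl fun j hj => ?_
        obtain ⟨hj1, hj2⟩ := Finset.mem_Ico.mp hj
        rw [hu_gt i j hin hj2 (by omega), hu_gt i' j hi'n hj2 (by omega),
          map_mul, map_mul, map_prod, hcr, hcr, hsplit j hj1,
          Finset.prod_mul_distrib, ← hcc j hj2]
        ring
      have h4 : u n b c α lam i n * (starRingEnd ℂ) (u n b c α lam i' n)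
          = (∏ k ∈ Ico (i+1) i', b k) * b i' * (c i * c i') *
            ∏ k ∈ Ico (i'+1) n, (b k * (starRingEnd ℂ) (b k)) := by
        rw [hu_n i hin, hu_n i' hi'n, map_mul, map_prod, hcr, hsplit n (by omega),
          Finset.prod_mul_distrib]
        ring
      rw [h1, h2, h3, h4]
      ring
    · -- i < i' = n
      rw [heq, hsum _ i hin]
      have h1 : ∑ j ∈ Ico 0 i, u n b c α lam i j * (starRingEnd ℂ) (u n b c α lam n j) = 0 :=
        Finset.sum_eq_zero fun j hj => by
          rw [hu_lt i j hin (Finset.mem_Ico.mp hj).2, zero_mul]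
      have hsplit : ∀ j, i + 1 ≤ j →
          (∏ k ∈ Ico 0 j, (starRingEnd ℂ) (b k))
            = ((∏ k ∈ Ico 0 i, (starRingEnd ℂ) (b k)) * (-α i)) *
              ∏ k ∈ Ico (i+1) j, (starRingEnd ℂ) (b k) := by
        intro j hjj
        rw [← Finset.prod_Ico_consecutive (fun k => (starRingEnd ℂ) (b k))
            (show 0 ≤ i+1 by omega) hjj,
          Finset.prod_Ico_succ_top (show 0 ≤ i by omega), hba i hin]
      have h2 : u n b c α lam i i * (starRingEnd ℂ) (u n b c α lam n i)
          = (starRingEnd ℂ) lam * (∏ k ∈ Ico 0 i, (starRingEnd ℂ) (b k)) * c i * α i := by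
        rw [hu_diag i hin, hu_top i hin, map_mul, map_mul, map_prod, hcr]
        ring
      have h3 : ∑ j ∈ Ico (i+1) n, u n b c α lam i j * (starRingEnd ℂ) (u n b c α lam n j)
          = (starRingEnd ℂ) lam * (∏ k ∈ Ico 0 i, (starRingEnd ℂ) (b k)) * c i * (-(α i)) *
            (1 - ∏ k ∈ Ico (i+1) n, (b k * (starRingEnd ℂ) (b k))) := by
        rw [← htel (i+1) (by omega), Finset.mul_sum]
        refine Finset.sum_congr rfl fun j hj => ?_
        obtain ⟨hj1, hj2⟩ := Finset.mem_Ico.mp hj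
        rw [hu_gt i j hin hj2 (by omega), hu_top j hj2,
          map_mul, map_mul, map_prod, hcr, hsplit j hj1,
          Finset.prod_mul_distrib, ← hcc j hj2]
        ring
      have h4 : u n b c α lam i n * (starRingEnd ℂ) (u n b c α lam n n)
          = (starRingEnd ℂ) lam * (∏ k ∈ Ico 0 i, (starRingEnd ℂ) (b k)) * c i * (-(α i)) *
            ∏ k ∈ Ico (i+1) n, (b k * (starRingEnd ℂ) (b k)) := by
        rw [hu_n i hin, hu_nn, map_mul, map_prod, hsplit n (by omega),
          Finset.prod_mul_distrib]
        ring
      rw [h1, h2, h3, h4]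
      ring

/-- The unitary 1-dilation `U^λ` of the compressed shift matrix associated with the finite
Blaschke product with zeros `a 0, …, a (n-1)` (indices here are 0-based; the entry
`U^λ_{ij}` of the statement, with 1-based indices, is `Ulam a λ (i-1) (j-1)`). -/
noncomputable def Ulam {n : ℕ} (a : Fin n → ℂ) (lam : ℂ) :
    Matrix (Fin (n + 1)) (Fin (n + 1)) ℂ :=
  Matrix.of fun i j =>
    if hi : (i : ℕ) < n then
      if hj : (j : ℕ) < n then
        if (i : ℕ) = (j : ℕ) then a ⟨i, hi⟩
        else if (i : ℕ) < (j : ℕ) then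
          (∏ k ∈ Finset.univ.filter (fun k : Fin n => (i : ℕ) < (k : ℕ) ∧ (k : ℕ) < (j : ℕ)),
              (-(starRingEnd ℂ) (a k))) *
            ((Real.sqrt (1 - ‖a ⟨i, hi⟩‖ ^ 2) : ℝ) : ℂ) *
            ((Real.sqrt (1 - ‖a ⟨j, hj⟩‖ ^ 2) : ℝ) : ℂ)
        else 0
      else
        (∏ k ∈ Finset.univ.filter (fun k : Fin n => (i : ℕ) < (k : ℕ)),
            (-(starRingEnd ℂ) (a k))) *
          ((Real.sqrt (1 - ‖a ⟨i, hi⟩‖ ^ 2) : ℝ) : ℂ)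
    else
      if hj : (j : ℕ) < n then
        lam * (∏ k ∈ Finset.univ.filter (fun k : Fin n => (k : ℕ) < (j : ℕ)),
            (-(starRingEnd ℂ) (a k))) *
          ((Real.sqrt (1 - ‖a ⟨j, hj⟩‖ ^ 2) : ℝ) : ℂ)
      else lam * ∏ k : Fin n, (-(starRingEnd ℂ) (a k))

open Finset in
private theorem UlamAux.entry {n : ℕ} (a : Fin n → ℂ) (lam : ℂ) (i j : Fin (n + 1)) :
    Ulam a lam i j = u n (B a) (C a) (A a) lam (i : ℕ) (j : ℕ) := by
  simp only [Ulam, Matrix.of_apply, u, B, C, A]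
  by_cases hi : (i : ℕ) < n <;> by_cases hj : (j : ℕ) < n
  · rw [dif_pos hi, dif_pos hj, if_pos hi, if_pos hj]
    by_cases heq : (i : ℕ) = (j : ℕ)
    · rw [if_pos heq, if_pos heq, dif_pos hi]
    · rw [if_neg heq, if_neg heq]
      by_cases hlt : (i : ℕ) < (j : ℕ)
      · rw [if_pos hlt, if_pos hlt, dif_pos hi, dif_pos hj]
        congr 2
        rw [filter_prod (fun k : Fin n => -(starRingEnd ℂ) (a k))
            (fun m => (i : ℕ) < m ∧ m < (j : ℕ)),
          show (Finset.range n).filter (fun m => (i : ℕ) < m ∧ m < (j : ℕ))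
              = Finset.Ico ((i : ℕ) + 1) (j : ℕ) from by
            ext m; simp [Finset.mem_filter, Finset.mem_Ico]; omega]
      · rw [if_neg hlt, if_neg hlt]
  · rw [dif_pos hi, dif_neg hj, if_pos hi, if_neg hj, dif_pos hi]
    congr 1
    rw [filter_prod (fun k : Fin n => -(starRingEnd ℂ) (a k)) (fun m => (i : ℕ) < m),
      show (Finset.range n).filter (fun m => (i : ℕ) < m)
          = Finset.Ico ((i : ℕ) + 1) n from by
        ext m; simp [Finset.mem_filter, Finset.mem_Ico]; omega]
  · rw [dif_neg hi, dif_pos hj, if_neg hi, if_pos hj, dif_pos hj]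
    congr 2
    rw [filter_prod (fun k : Fin n => -(starRingEnd ℂ) (a k)) (fun m => m < (j : ℕ)),
      show (Finset.range n).filter (fun m => m < (j : ℕ))
          = Finset.Ico 0 (j : ℕ) from by
        ext m; simp [Finset.mem_filter, Finset.mem_Ico]; omega]
  · rw [dif_neg hi, dif_neg hj, if_neg hi, if_neg hj]
    congr 1
    rw [← Finset.range_eq_Ico, ← Fin.prod_univ_eq_prod_range]
    exact Finset.prod_congr rfl fun k _ => by simp [k.isLt]

/-- The matrix `U^λ` is unitary whenever all `|a_j| < 1` and `|λ| = 1`. -/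
theorem Ulam_unitary (n : ℕ) (a : Fin n → ℂ) (ha : ∀ j, ‖a j‖ < 1)
    (lam : ℂ) (hlam : ‖lam‖ = 1) :
    Ulam a lam ∈ Matrix.unitaryGroup (Fin (n + 1)) ℂ := by
  rw [Matrix.mem_unitaryGroup_iff]
  have hM : ∀ p q : Fin (n + 1),
      (Ulam a lam * star (Ulam a lam)) p q
        = ∑ m ∈ Finset.range (n + 1),
            UlamAux.u n (UlamAux.B a) (UlamAux.C a) (UlamAux.A a) lam (p : ℕ) m *
              (starRingEnd ℂ) (UlamAux.u n (UlamAux.B a) (UlamAux.C a) (UlamAux.A a) lam (q : ℕ) m) := by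
    intro p q
    rw [Matrix.mul_apply,
      ← Fin.sum_univ_eq_sum_range (fun m =>
        UlamAux.u n (UlamAux.B a) (UlamAux.C a) (UlamAux.A a) lam (p : ℕ) m *
          (starRingEnd ℂ) (UlamAux.u n (UlamAux.B a) (UlamAux.C a) (UlamAux.A a) lam (q : ℕ) m))
        (n + 1)]
    refine Finset.sum_congr rfl fun m _ => ?_
    rw [Matrix.star_apply, UlamAux.entry, UlamAux.entry]
    rfl
  have hcr : ∀ k, (starRingEnd ℂ) (UlamAux.C a k) = UlamAux.C a k :=
    fun k => Complex.conj_ofReal _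
  have hcc : ∀ k, k < n → UlamAux.C a k * UlamAux.C a k
      = 1 - UlamAux.B a k * (starRingEnd ℂ) (UlamAux.B a k) := by
    intro k hk
    simp only [UlamAux.B, UlamAux.C, dif_pos hk]
    have h0 : (0 : ℝ) ≤ 1 - ‖a ⟨k, hk⟩‖ ^ 2 := by
      nlinarith [ha ⟨k, hk⟩, norm_nonneg (a ⟨k, hk⟩)]
    rw [← Complex.ofReal_mul, Real.mul_self_sqrt h0, map_neg, Complex.conj_conj,
      neg_mul_neg, mul_comm ((starRingEnd ℂ) (a ⟨k, hk⟩)) (a ⟨k, hk⟩), Complex.mul_conj,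
      Complex.normSq_eq_norm_sq]
    push_cast
    ring
  have hab : ∀ k, k < n → (starRingEnd ℂ) (UlamAux.A a k) = -(UlamAux.B a k) := by
    intro k hk
    simp [UlamAux.A, UlamAux.B, dif_pos hk]
  have hl : lam * (starRingEnd ℂ) lam = 1 := by
    rw [Complex.mul_conj, ← Complex.sq_norm, hlam]
    norm_num
  ext i j
  rcases le_total (i : ℕ) (j : ℕ) with h | h
  · rw [hM i j, UlamAux.key n (UlamAux.B a) (UlamAux.C a) (UlamAux.A a) lam hcr hcc hab hl
      (i : ℕ) (j : ℕ) h (Nat.lt_succ_iff.mp j.isLt), Matrix.one_apply]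
    by_cases hij : i = j
    · simp [hij]
    · rw [if_neg hij, if_neg (fun hh => hij (Fin.ext hh))]
  · have hsym : (Ulam a lam * star (Ulam a lam)) i j
        = (starRingEnd ℂ) ((Ulam a lam * star (Ulam a lam)) j i) := by
      rw [hM i j, hM j i, map_sum]
      refine Finset.sum_congr rfl fun m _ => ?_
      rw [map_mul, Complex.conj_conj]
      ring
    rw [hsym, hM j i, UlamAux.key n (UlamAux.B a) (UlamAux.C a) (UlamAux.A a) lam hcr hcc hab hl
      (j : ℕ) (i : ℕ) h (Nat.lt_succ_iff.mp i.isLt), Matrix.one_apply]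
    by_cases hij : i = j
    · simp [hij]
    · rw [if_neg (fun hh : (j : ℕ) = (i : ℕ) => hij (Fin.ext hh.symm)), if_neg hij, map_zero]
end
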